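/- arXiv:1607.04879 — 14 statements merged into one kernel-verified Lean document; each statement's English description precedes it below -/
import Mathlib

section
/- Let A be a nonnegative bounded linear operator on a Banach space X, and let u ∈ X lie in the closure of the range of A. Then the approximation error of Lavrentiev regularization with exact data tends to zero, i.e. ‖γ (A + γI)⁻¹ u‖ → 0 as γ → 0 from the right. -/
open Filter Asymptotics
open scoped Topology

/-- Converse/direct theory for Lavrentiev regularization (Plato).
STATEMENT 0: if `A` is a nonnegative bounded linear operator on a Banach space `X`
(with resolvent family `R γ = (A + γ I)⁻¹` satisfying `‖R γ‖ ≤ M / γ`), and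
`u` lies in the closure of the range of `A`, then `‖γ (A + γ I)⁻¹ u‖ → 0` as `γ → 0⁺`. -/
theorem lavrentiev_exact_data_convergence
    {X : Type*} [NormedAddCommGroup X] [NormedSpace ℝ X] [CompleteSpace X]
    (A : X →L[ℝ] X) (M : ℝ) (hM : 1 ≤ M) (R : ℝ → X →L[ℝ] X)
    (hinv : ∀ γ : ℝ, 0 < γ →
      (A + γ • (1 : X →L[ℝ] X)).comp (R γ) = 1 ∧
      (R γ).comp (A + γ • (1 : X →L[ℝ] X)) = 1)
    (hnorm : ∀ γ : ℝ, 0 < γ → ‖R γ‖ ≤ M / γ)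
    (u : X) (hu : u ∈ closure (Set.range A)) :
    Tendsto (fun γ : ℝ => ‖γ • R γ u‖) (𝓝[>] (0 : ℝ)) (𝓝 0) := by
  have hM0 : (0 : ℝ) < M := lt_of_lt_of_le one_pos hM
  rw [Metric.tendsto_nhdsWithin_nhds]
  intro ε hε
  obtain ⟨y, ⟨v, rfl⟩, hy⟩ := Metric.mem_closure_iff.mp hu (ε / (2 * M)) (by positivity)
  have hv0 : (0 : ℝ) ≤ (1 + M) * ‖v‖ := by positivity
  refine ⟨ε / (2 * ((1 + M) * ‖v‖ + 1)), by positivity, ?_⟩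
  intro γ hγ hdist
  have hγ0 : 0 < γ := hγ
  have hdγ : γ < ε / (2 * ((1 + M) * ‖v‖ + 1)) := by
    rwa [Real.dist_eq, sub_zero, abs_of_pos hγ0] at hdist
  -- key identity: R γ (A v) = v - γ • R γ v
  have hid : R γ (A v) = v - γ • R γ v := by
    have h := (hinv γ hγ0).2
    have h2 : R γ ((A + γ • (1 : X →L[ℝ] X)) v) = v := by
      rw [← ContinuousLinearMap.comp_apply, h]; rfl
    simp only [ContinuousLinearMap.add_apply, ContinuousLinearMap.smul_apply,
      ContinuousLinearMap.one_apply, map_add, map_smul] at h2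
    have := h2
    rw [eq_sub_iff_add_eq]
    linear_combination (norm := module) this
  have hRn : ‖R γ‖ ≤ M / γ := hnorm γ hγ0
  have hbound1 : ‖γ • R γ (u - A v)‖ ≤ M * ‖u - A v‖ := by
    rw [norm_smul, Real.norm_eq_abs, abs_of_pos hγ0]
    calc γ * ‖R γ (u - A v)‖ ≤ γ * (‖R γ‖ * ‖u - A v‖) := by
          exact mul_le_mul_of_nonneg_left ((R γ).le_opNorm _) hγ0.le
      _ ≤ γ * ((M / γ) * ‖u - A v‖) := by
          have : ‖R γ‖ * ‖u - A v‖ ≤ (M / γ) * ‖u - A v‖ :=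
            mul_le_mul_of_nonneg_right hRn (norm_nonneg _)
          exact mul_le_mul_of_nonneg_left this hγ0.le
      _ = M * ‖u - A v‖ := by field_simp
  have hbound2 : ‖γ • R γ (A v)‖ ≤ γ * ((1 + M) * ‖v‖) := by
    rw [hid, norm_smul, Real.norm_eq_abs, abs_of_pos hγ0]
    have h1 : ‖v - γ • R γ v‖ ≤ ‖v‖ + γ * ‖R γ v‖ := by
      calc ‖v - γ • R γ v‖ ≤ ‖v‖ + ‖γ • R γ v‖ := norm_sub_le _ _
        _ = ‖v‖ + γ * ‖R γ v‖ := by rw [norm_smul, Real.norm_eq_abs, abs_of_pos hγ0]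
    have h2 : γ * ‖R γ v‖ ≤ M * ‖v‖ := by
      calc γ * ‖R γ v‖ ≤ γ * (‖R γ‖ * ‖v‖) :=
            mul_le_mul_of_nonneg_left ((R γ).le_opNorm _) hγ0.le
        _ ≤ γ * ((M / γ) * ‖v‖) :=
            mul_le_mul_of_nonneg_left
              (mul_le_mul_of_nonneg_right hRn (norm_nonneg _)) hγ0.le
        _ = M * ‖v‖ := by field_simp
    calc γ * ‖v - γ • R γ v‖ ≤ γ * (‖v‖ + M * ‖v‖) := by
          exact mul_le_mul_of_nonneg_left (h1.trans (by linarith)) hγ0.le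
      _ = γ * ((1 + M) * ‖v‖) := by ring
  have hsplit : ‖γ • R γ u‖ ≤ ‖γ • R γ (u - A v)‖ + ‖γ • R γ (A v)‖ := by
    have : γ • R γ u = γ • R γ (u - A v) + γ • R γ (A v) := by
      rw [map_sub, smul_sub]; abel
    rw [this]; exact norm_add_le _ _
  have hdistu : ‖u - A v‖ < ε / (2 * M) := by
    rwa [dist_eq_norm] at hy
  have h1 : M * ‖u - A v‖ < ε / 2 := by
    have := mul_lt_mul_of_pos_left hdistu hM0
    calc M * ‖u - A v‖ < M * (ε / (2 * M)) := this
      _ = ε / 2 := by field_simp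
  have h2 : γ * ((1 + M) * ‖v‖) < ε / 2 := by
    have hlt : γ * ((1 + M) * ‖v‖ + 1) < ε / 2 := by
      have hpos : (0 : ℝ) < (1 + M) * ‖v‖ + 1 := by positivity
      calc γ * ((1 + M) * ‖v‖ + 1)
          < (ε / (2 * ((1 + M) * ‖v‖ + 1))) * ((1 + M) * ‖v‖ + 1) :=
            mul_lt_mul_of_pos_right hdγ hpos
        _ = ε / 2 := by field_simp
    nlinarith
  rw [Real.dist_eq, sub_zero, abs_of_nonneg (norm_nonneg _)]
  calc ‖γ • R γ u‖ ≤ ‖γ • R γ (u - A v)‖ + ‖γ • R γ (A v)‖ := hsplit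
    _ ≤ M * ‖u - A v‖ + γ * ((1 + M) * ‖v‖) := add_le_add hbound1 hbound2
    _ < ε / 2 + ε / 2 := add_lt_add h1 h2
    _ = ε := by ring
end

section
/- Let A be a nonnegative bounded linear operator on a reflexive Banach space X, and let u ∈ X. If γ (A + γI)⁻¹ u → 0 as γ → 0 from the right, then u belongs to the closure of the range of A. -/
open Filter Asymptotics
open scoped Topology

/-- converse result for exact data. If `A` is a nonnegative bounded linear
operator on a reflexive Banach space `X` and `γ (A + γ I)⁻¹ u → 0` as `γ → 0⁺`, then
`u` belongs to the closure of the range of `A`. -/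
theorem lavrentiev_converse_exact_data_closure
    {X : Type*} [NormedAddCommGroup X] [NormedSpace ℝ X] [CompleteSpace X]
    (hrefl : Function.Surjective (NormedSpace.inclusionInDoubleDual ℝ X))
    (A : X →L[ℝ] X) (M : ℝ) (hM : 1 ≤ M) (R : ℝ → X →L[ℝ] X)
    (hinv : ∀ γ : ℝ, 0 < γ →
      (A + γ • (1 : X →L[ℝ] X)).comp (R γ) = 1 ∧
      (R γ).comp (A + γ • (1 : X →L[ℝ] X)) = 1)
    (hnorm : ∀ γ : ℝ, 0 < γ → ‖R γ‖ ≤ M / γ)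
    (u : X)
    (hconv : Tendsto (fun γ : ℝ => γ • R γ u) (𝓝[>] (0 : ℝ)) (𝓝 0)) :
    u ∈ closure (Set.range A) := by
  have key : ∀ γ : ℝ, 0 < γ → A (R γ u) = u - γ • R γ u := by
    intro γ hγ
    have h := congrArg (fun T : X →L[ℝ] X => T u) (hinv γ hγ).1
    simp only [ContinuousLinearMap.comp_apply, ContinuousLinearMap.add_apply,
      ContinuousLinearMap.smul_apply, ContinuousLinearMap.one_apply] at h
    rw [eq_sub_iff_add_eq]; exact h
  have htend : Tendsto (fun γ : ℝ => A (R γ u)) (𝓝[>] (0 : ℝ)) (𝓝 u) := by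
    have : Tendsto (fun γ : ℝ => u - γ • R γ u) (𝓝[>] (0 : ℝ)) (𝓝 (u - 0)) :=
      tendsto_const_nhds.sub hconv
    rw [sub_zero] at this
    exact this.congr' (by
      filter_upwards [self_mem_nhdsWithin] with γ hγ
      exact (key γ hγ).symm)
  exact mem_closure_of_tendsto htend (by
    filter_upwards with γ using Set.mem_range_self _)
end

section
/- Let A be a nonnegative bounded linear operator on a reflexive Banach space X, and let u ∈ X. If ‖γ (A + γI)⁻¹ u‖ = O(γ) as γ → 0 from the right, then u belongs to the range of A. -/
open Filter Asymptotics
open scoped Topology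

/-- converse result for exact data. If `A` is a nonnegative bounded linear
operator on a reflexive Banach space `X` and `‖γ (A + γ I)⁻¹ u‖ = O(γ)` as `γ → 0⁺`,
then `u ∈ R(A)`. -/
theorem lavrentiev_converse_exact_data_range
    {X : Type*} [NormedAddCommGroup X] [NormedSpace ℝ X] [CompleteSpace X]
    (hrefl : Function.Surjective (NormedSpace.inclusionInDoubleDual ℝ X))
    (A : X →L[ℝ] X) (M : ℝ) (hM : 1 ≤ M) (R : ℝ → X →L[ℝ] X)
    (hinv : ∀ γ : ℝ, 0 < γ →
      (A + γ • (1 : X →L[ℝ] X)).comp (R γ) = 1 ∧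
      (R γ).comp (A + γ • (1 : X →L[ℝ] X)) = 1)
    (hnorm : ∀ γ : ℝ, 0 < γ → ‖R γ‖ ≤ M / γ)
    (u : X)
    (hrate : (fun γ : ℝ => γ • R γ u) =O[𝓝[>] (0 : ℝ)] (fun γ : ℝ => γ)) :
    u ∈ Set.range A := by
  classical
  set L : Filter ℝ := 𝓝[>] (0 : ℝ) with hLdef
  haveI hLne : L.NeBot := nhdsGT_neBot 0
  -- key algebraic identity: A (R γ u) = u - γ • R γ u for γ > 0
  have hkey : ∀ γ : ℝ, 0 < γ → A (R γ u) = u - γ • R γ u := by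
    intro γ hγ
    have h := (hinv γ hγ).1
    have h' : A (R γ u) + γ • R γ u = u := by
      have := congrArg (fun T : X →L[ℝ] X => T u) h
      simpa [ContinuousLinearMap.add_apply, ContinuousLinearMap.smul_apply,
        ContinuousLinearMap.comp_apply] using this
    exact eq_sub_of_add_eq h'
  -- γ • R γ u → 0
  have htend0 : Filter.Tendsto (fun γ : ℝ => γ • R γ u) L (𝓝 (0 : X)) := by
    have hγ0 : Filter.Tendsto (fun γ : ℝ => γ) L (𝓝 (0 : ℝ)) :=
      tendsto_id.mono_left nhdsWithin_le_nhds
    exact hrate.trans_tendsto hγ0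
  -- A (R γ u) → u
  have htendu : Filter.Tendsto (fun γ : ℝ => A (R γ u)) L (𝓝 u) := by
    have h1 : Filter.Tendsto (fun γ : ℝ => u - γ • R γ u) L (𝓝 u) := by
      simpa using tendsto_const_nhds.sub htend0
    refine h1.congr' ?_
    filter_upwards [self_mem_nhdsWithin] with γ hγ
    exact (hkey γ hγ).symm
  -- the bound: ‖R γ u‖ ≤ c eventually
  obtain ⟨c, hc⟩ := hrate.bound
  have hbound : ∀ᶠ γ : ℝ in L, ‖R γ u‖ ≤ c := by
    filter_upwards [hc, self_mem_nhdsWithin] with γ hγ hγpos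
    have h1 : γ * ‖R γ u‖ ≤ c * γ := by
      simpa [norm_smul, abs_of_pos (show (0:ℝ) < γ from hγpos), Real.norm_eq_abs] using hγ
    have hp : (0:ℝ) < γ := hγpos
    nlinarith [norm_nonneg (R γ u)]
  -- move into the weak-* topology on the double dual
  set ι := NormedSpace.inclusionInDoubleDual ℝ X with hι
  set g : ℝ → WeakDual ℝ (StrongDual ℝ X) := fun γ =>
    StrongDual.toWeakDual (ι (R γ u)) with hg
  have hball : ∀ᶠ γ : ℝ in L,
      g γ ∈ WeakDual.toStrongDual ⁻¹' Metric.closedBall 0 c := by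
    filter_upwards [hbound] with γ hγ
    simp only [Set.mem_preimage, Metric.mem_closedBall, dist_zero_right]
    refine (dist_zero_right (WeakDual.toStrongDual (g γ) : StrongDual ℝ (StrongDual ℝ X))).trans_le ?_
    calc ‖(WeakDual.toStrongDual (g γ) : StrongDual ℝ (StrongDual ℝ X))‖
        = ‖ι (R γ u)‖ := rfl
      _ ≤ ‖R γ u‖ := NormedSpace.double_dual_bound ℝ X _
      _ ≤ c := hγ
  haveI : (Filter.map g L).NeBot := Filter.map_neBot
  obtain ⟨φ, -, hφ⟩ :=
    (WeakDual.isCompact_closedBall (𝕜 := ℝ) (E := StrongDual ℝ X)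
      (0 : StrongDual ℝ (StrongDual ℝ X)) c).exists_clusterPt
      (f := Filter.map g L) (Filter.le_principal_iff.2 (Filter.mem_map.2 hball))
  -- reflexivity: φ = ι v
  obtain ⟨v, hv⟩ := hrefl (WeakDual.toStrongDual φ)
  refine ⟨v, ?_⟩
  rw [NormedSpace.eq_iff_forall_dual_eq ℝ]
  intro f
  -- evaluation at ψ := f ∘ A
  set ψ : StrongDual ℝ X := f.comp A with hψ
  have hev : ClusterPt (φ ψ) (Filter.map (fun γ : ℝ => g γ ψ) L) := by
    have hc1 : ContinuousAt (fun x : WeakDual ℝ (StrongDual ℝ X) => x ψ) φ :=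
      (WeakDual.eval_continuous ψ).continuousAt
    have := hφ.map hc1 (Filter.tendsto_map (f := fun x : WeakDual ℝ (StrongDual ℝ X) => x ψ))
    rwa [Filter.map_map] at this
  -- the evaluated net converges to f u
  have htendf : Filter.Tendsto (fun γ : ℝ => g γ ψ) L (𝓝 (f u)) := by
    have : (fun γ : ℝ => g γ ψ) = fun γ : ℝ => f (A (R γ u)) := by
      funext γ; rfl
    rw [this]
    exact (f.continuous.tendsto u).comp htendu
  -- a cluster point of a convergent filter equals the limit (ℝ is T2)
  have heq : φ ψ = f u := by
    have hne : (𝓝 (φ ψ) ⊓ 𝓝 (f u)).NeBot :=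
      (ClusterPt.mono hev htendf : ClusterPt (φ ψ) (𝓝 (f u)))
    exact (t2_iff_nhds.mp inferInstance hne)
  -- φ ψ = f (A v)
  have hval : φ ψ = f (A v) := by
    have : (WeakDual.toStrongDual φ) ψ = ψ v := by
      rw [← hv]; rfl
    simpa [hψ] using this
  have : f (A v) = f u := by rw [← hval, heq]
  exact this
end

section
/- Saturation for exact data: let A be a nonnegative bounded linear operator on a reflexive Banach space X, and let u ∈ X. If ‖γ (A + γI)⁻¹ u‖ = o(γ) as γ → 0 from the right, then u = 0. -/
open Filter Asymptotics
open scoped Topology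

/-- saturation for exact data. If `A` is a nonnegative bounded linear
operator on a reflexive Banach space `X` and `‖γ (A + γ I)⁻¹ u‖ = o(γ)` as `γ → 0⁺`,
then `u = 0`. -/
theorem lavrentiev_saturation_exact_data
    {X : Type*} [NormedAddCommGroup X] [NormedSpace ℝ X] [CompleteSpace X]
    (hrefl : Function.Surjective (NormedSpace.inclusionInDoubleDual ℝ X))
    (A : X →L[ℝ] X) (M : ℝ) (hM : 1 ≤ M) (R : ℝ → X →L[ℝ] X)
    (hinv : ∀ γ : ℝ, 0 < γ →
      (A + γ • (1 : X →L[ℝ] X)).comp (R γ) = 1 ∧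
      (R γ).comp (A + γ • (1 : X →L[ℝ] X)) = 1)
    (hnorm : ∀ γ : ℝ, 0 < γ → ‖R γ‖ ≤ M / γ)
    (u : X)
    (hrate : (fun γ : ℝ => γ • R γ u) =o[𝓝[>] (0 : ℝ)] (fun γ : ℝ => γ)) :
    u = 0 := by
  -- Step 1: `R γ u → 0` as `γ → 0⁺`.
  have hR0 : Tendsto (fun γ : ℝ => R γ u) (𝓝[>] (0 : ℝ)) (𝓝 0) := by
    rw [NormedAddCommGroup.tendsto_nhds_zero]
    intro ε hε
    have h := hrate.def (half_pos hε)
    filter_upwards [h, self_mem_nhdsWithin] with γ hγ hγpos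
    have hγpos : (0 : ℝ) < γ := hγpos
    have : ‖γ • R γ u‖ = γ * ‖R γ u‖ := by
      rw [norm_smul, Real.norm_eq_abs, abs_of_pos hγpos]
    rw [this, Real.norm_eq_abs, abs_of_pos hγpos] at hγ
    have hle : ‖R γ u‖ ≤ ε / 2 := by
      nlinarith [norm_nonneg (R γ u)]
    linarith [half_lt_self hε]
  -- Step 2: `γ • R γ u → 0`.
  have hγR0 : Tendsto (fun γ : ℝ => γ • R γ u) (𝓝[>] (0 : ℝ)) (𝓝 0) :=
    hrate.isBigO.trans_tendsto (tendsto_id.mono_left nhdsWithin_le_nhds)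
  -- Step 3: the constant `u` equals `A (R γ u) + γ • R γ u`.
  have hEq : ∀ γ : ℝ, 0 < γ → A (R γ u) + γ • R γ u = u := by
    intro γ hγ
    have := congrArg (fun T : X →L[ℝ] X => T u) (hinv γ hγ).1
    simpa [ContinuousLinearMap.comp_apply, ContinuousLinearMap.add_apply,
      ContinuousLinearMap.smul_apply, ContinuousLinearMap.one_apply] using this
  -- Step 4: conclude by uniqueness of limits.
  have h1 : Tendsto (fun γ : ℝ => A (R γ u) + γ • R γ u) (𝓝[>] (0 : ℝ)) (𝓝 0) := by
    have hA : Tendsto (fun γ : ℝ => A (R γ u)) (𝓝[>] (0 : ℝ)) (𝓝 0) := by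
      have := (A.continuous.tendsto 0).comp hR0
      simpa [Function.comp_def] using this
    simpa using hA.add hγR0
  have h2 : Tendsto (fun _ : ℝ => u) (𝓝[>] (0 : ℝ)) (𝓝 0) := by
    refine h1.congr' ?_
    filter_upwards [self_mem_nhdsWithin] with γ hγ using hEq γ hγ
  exact tendsto_nhds_unique tendsto_const_nhds h2
end

section
/- Let A be a nonnegative bounded linear operator on a reflexive Banach space X, and let u ∈ X. Suppose there is a sequence (γₙ) of positive real numbers with γₙ → 0 such that ‖γₙ (A + γₙI)⁻¹ u‖ = o(γₙ) as n → ∞. Then u = 0. -/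
open Filter Asymptotics
open scoped Topology

/-- sequential saturation for exact data. If `A` is a nonnegative bounded
linear operator on a reflexive Banach space `X` and along some sequence `γₙ → 0` of
positive numbers one has `‖γₙ (A + γₙ I)⁻¹ u‖ = o(γₙ)`, then `u = 0`. -/
theorem lavrentiev_saturation_exact_data_seq
    {X : Type*} [NormedAddCommGroup X] [NormedSpace ℝ X] [CompleteSpace X]
    (hrefl : Function.Surjective (NormedSpace.inclusionInDoubleDual ℝ X))
    (A : X →L[ℝ] X) (M : ℝ) (hM : 1 ≤ M) (R : ℝ → X →L[ℝ] X)
    (hinv : ∀ γ : ℝ, 0 < γ →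
      (A + γ • (1 : X →L[ℝ] X)).comp (R γ) = 1 ∧
      (R γ).comp (A + γ • (1 : X →L[ℝ] X)) = 1)
    (hnorm : ∀ γ : ℝ, 0 < γ → ‖R γ‖ ≤ M / γ)
    (u : X) (γseq : ℕ → ℝ) (hpos : ∀ n, 0 < γseq n)
    (hto0 : Tendsto γseq atTop (𝓝 0))
    (hrate : (fun n : ℕ => γseq n • R (γseq n) u) =o[atTop] (fun n : ℕ => γseq n)) :
    u = 0 := by
  have hkey : ∀ n, A (R (γseq n) u) + γseq n • R (γseq n) u = u := by
    intro n
    have h := congrArg (fun T : X →L[ℝ] X => T u) (hinv (γseq n) (hpos n)).1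
    simpa using h
  have hw : Tendsto (fun n => R (γseq n) u) atTop (𝓝 0) := by
    rw [← isLittleO_one_iff ℝ]
    rw [isLittleO_iff]
    intro c hc
    filter_upwards [hrate.def hc] with n hn
    have hγ := hpos n
    rw [norm_smul, Real.norm_of_nonneg hγ.le] at hn
    rw [mul_comm c (γseq n)] at hn
    simpa using (mul_le_mul_iff_right₀ hγ).mp hn
  have hA : Tendsto (fun n => A (R (γseq n) u)) atTop (𝓝 0) := by
    have := (A.continuous.tendsto 0).comp hw
    simpa [Function.comp_def] using this
  have hv : Tendsto (fun n => γseq n • R (γseq n) u) atTop (𝓝 0) :=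
    hrate.isBigO.trans_tendsto hto0
  have hsum : Tendsto (fun n => A (R (γseq n) u) + γseq n • R (γseq n) u)
      atTop (𝓝 (0 + 0)) := hA.add hv
  have hu : Tendsto (fun _ : ℕ => u) atTop (𝓝 0) := by
    simpa [hkey] using hsum
  exact tendsto_nhds_unique tendsto_const_nhds hu
end

section
/- Let A be a nonnegative bounded linear operator on a reflexive Banach space X, and let u ∈ X with u not in the range of A. Then ‖(A + γI)⁻¹ u‖ → ∞ as γ → 0 from the right. -/
open Filter Asymptotics
open scoped Topology

/-- if `A` is a nonnegative bounded linear operator on a reflexive Banach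
space `X` and `u ∉ R(A)`, then `‖(A + γ I)⁻¹ u‖ → ∞` as `γ → 0⁺`. -/
theorem lavrentiev_resolvent_blowup
    {X : Type*} [NormedAddCommGroup X] [NormedSpace ℝ X] [CompleteSpace X]
    (hrefl : Function.Surjective (NormedSpace.inclusionInDoubleDual ℝ X))
    (A : X →L[ℝ] X) (M : ℝ) (hM : 1 ≤ M) (R : ℝ → X →L[ℝ] X)
    (hinv : ∀ γ : ℝ, 0 < γ →
      (A + γ • (1 : X →L[ℝ] X)).comp (R γ) = 1 ∧
      (R γ).comp (A + γ • (1 : X →L[ℝ] X)) = 1)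
    (hnorm : ∀ γ : ℝ, 0 < γ → ‖R γ‖ ≤ M / γ)
    (u : X) (hu : u ∉ Set.range A) :
    Tendsto (fun γ : ℝ => ‖R γ u‖) (𝓝[>] (0 : ℝ)) atTop := by
  classical
  by_contra h
  -- extract a bound `C` attained frequently as `γ → 0⁺`
  obtain ⟨C, hC⟩ : ∃ C : ℝ, ∃ᶠ γ in 𝓝[>] (0 : ℝ), ‖R γ u‖ < C := by
    by_contra hcon
    push_neg at hcon
    refine h (tendsto_atTop.2 fun C => ?_)
    have := hcon C
    simpa using this
  set l : Filter ℝ := 𝓝[>] (0 : ℝ) ⊓ 𝓟 {γ | ‖R γ u‖ < C} with hl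
  haveI hlne : l.NeBot := frequently_iff_neBot.1 hC
  have hll : l ≤ 𝓝[>] (0 : ℝ) := inf_le_left
  have hγpos : ∀ᶠ γ in l, 0 < γ :=
    (eventually_mem_nhdsWithin.filter_mono hll)
  have hbound : ∀ᶠ γ in l, ‖R γ u‖ < C := by
    have : {γ : ℝ | ‖R γ u‖ < C} ∈ l := mem_inf_of_right (mem_principal_self _)
    exact this
  have hγ0 : Tendsto (fun γ : ℝ => γ) l (𝓝 0) :=
    tendsto_id.mono_left (hll.trans nhdsWithin_le_nhds)
  -- pass to the bidual with the weak-* topology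
  set J := NormedSpace.inclusionInDoubleDual ℝ X with hJ
  set g : ℝ → WeakDual ℝ (StrongDual ℝ X) :=
    fun γ => StrongDual.toWeakDual (J (R γ u)) with hg
  have hJnorm : ∀ z : X, ‖J z‖ = ‖z‖ := fun z =>
    (NormedSpace.inclusionInDoubleDualLi ℝ (E := X)).norm_map z
  have hK : IsCompact (WeakDual.toStrongDual ⁻¹' Metric.closedBall (0 : StrongDual ℝ (StrongDual ℝ X)) C) :=
    WeakDual.isCompact_closedBall (𝕜 := ℝ) 0 C
  have hgl : map g l ≤ 𝓟 (WeakDual.toStrongDual ⁻¹' Metric.closedBall (0 : StrongDual ℝ (StrongDual ℝ X)) C) := by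
    rw [le_principal_iff, mem_map]
    refine mem_of_superset hbound ?_
    intro γ hγ
    simp only [Set.mem_setOf_eq, Set.mem_preimage, Metric.mem_closedBall, dist_zero_right] at hγ ⊢
    calc dist (WeakDual.toStrongDual (g γ) : StrongDual ℝ (StrongDual ℝ X)) 0
        = ‖J (R γ u)‖ := by exact dist_zero_right (J (R γ u))
      _ = ‖R γ u‖ := hJnorm _
      _ ≤ C := hγ.le
  obtain ⟨φ, hφK, hφ⟩ := hK.exists_clusterPt hgl
  -- a finer filter along which `g` converges weakly-* to `φ`
  have hne : (map g l ⊓ 𝓝 φ).NeBot := by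
    have h1 : (𝓝 φ ⊓ map g l).NeBot := hφ
    rwa [inf_comm] at h1
  haveI hFne : (l ⊓ comap g (𝓝 φ)).NeBot := Filter.neBot_inf_comap_iff_map.2 hne
  set F := l ⊓ comap g (𝓝 φ) with hF
  have hgF : Tendsto g F (𝓝 φ) := tendsto_comap.mono_left inf_le_right
  have hFl : F ≤ l := inf_le_left
  -- reflexivity: `φ = J x`
  obtain ⟨x, hx⟩ := hrefl (WeakDual.toStrongDual φ)
  -- `A (R γ u) → u` strongly along `F`
  have hres : ∀ γ : ℝ, 0 < γ → A (R γ u) + γ • (R γ u) = u := by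
    intro γ hγ
    have := congrArg (fun T : X →L[ℝ] X => T u) (hinv γ hγ).1
    simpa using this
  have hsmul : Tendsto (fun γ : ℝ => γ • (R γ u)) F (𝓝 0) := by
    have hb : Tendsto (fun γ : ℝ => γ * C) F (𝓝 0) := by
      simpa using (hγ0.mono_left hFl).mul_const C
    refine squeeze_zero_norm' ?_ hb
    · filter_upwards [hγpos.filter_mono hFl, hbound.filter_mono hFl] with γ hγ hb
      have : ‖γ • (R γ u)‖ = γ * ‖R γ u‖ := by
        rw [norm_smul, Real.norm_eq_abs, abs_of_pos hγ]
      rw [this]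
      exact mul_le_mul_of_nonneg_left hb.le hγ.le
  have hAu : Tendsto (fun γ : ℝ => A (R γ u)) F (𝓝 u) := by
    have heq : (fun γ : ℝ => A (R γ u)) =ᶠ[F] fun γ => u - γ • (R γ u) := by
      filter_upwards [hγpos.filter_mono hFl] with γ hγ
      exact eq_sub_of_add_eq (hres γ hγ)
    rw [Filter.tendsto_congr' heq]
    have := tendsto_const_nhds (x := u) (f := F) |>.sub hsmul
    simpa using this
  -- conclude `A x = u` by testing against all functionals
  refine hu ⟨x, ?_⟩
  rw [NormedSpace.eq_iff_forall_dual_eq ℝ]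
  intro f
  -- weak convergence evaluated at `f.comp A`
  have hweak := tendsto_iff_forall_eval_tendsto_topDualPairing.1 hgF (f.comp A)
  have hgval : (fun γ : ℝ => topDualPairing ℝ (StrongDual ℝ X) (g γ) (f.comp A))
      = fun γ : ℝ => f (A (R γ u)) := by
    funext γ
    rfl
  have hφval : topDualPairing ℝ (StrongDual ℝ X) φ (f.comp A) = f (A x) := by
    change φ (f.comp A) = f (A x)
    have h1 : φ (f.comp A) = (WeakDual.toStrongDual φ) (f.comp A) := rfl
    rw [h1, ← hx]
    rfl
  rw [hgval, hφval] at hweak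
  have hstrong : Tendsto (fun γ : ℝ => f (A (R γ u))) F (𝓝 (f u)) :=
    (f.continuous.tendsto u).comp hAu
  exact tendsto_nhds_unique hweak hstrong
end

section
/- Let A be an accretive bounded linear operator on a Hilbert space H with R(A) ≠ H, let u ∈ H and δ > 0. Define Q_δ(u) = inf over γ > 0 of sup over Δ ∈ H with ‖Δ‖ ≤ δ of ‖-γ(A + γI)⁻¹u + (A + γI)⁻¹Δ‖, and for 1 ≤ p < ∞ define R_{δ,p}(u) = inf over γ > 0 of (‖γ(A + γI)⁻¹u‖^p + (δ/γ)^p)^{1/p}. Then R_{δ,2}(u) ≤ Q_δ(u) ≤ R_{δ,1}(u). -/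
open Filter Asymptotics
open scoped Topology

set_option maxHeartbeats 1000000 in
/-- for an accretive bounded linear operator `A` on a Hilbert space `H`
with `R(A) ≠ H`, and resolvent family `R γ = (A + γ I)⁻¹`, the quantity
`Q_δ(u) = inf_{γ>0} sup_{‖Δ‖≤δ} ‖-γ(A+γI)⁻¹u + (A+γI)⁻¹Δ‖` satisfies
`R_{δ,2}(u) ≤ Q_δ(u) ≤ R_{δ,1}(u)`, where
`R_{δ,p}(u) = inf_{γ>0} (‖γ(A+γI)⁻¹u‖^p + (δ/γ)^p)^{1/p}`. -/
theorem lavrentiev_Q_between_R2_R1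
    {𝕜 : Type*} [RCLike 𝕜] {H : Type*} [NormedAddCommGroup H]
    [InnerProductSpace 𝕜 H] [CompleteSpace H]
    (A : H →L[𝕜] H)
    (hacc : ∀ v : H, 0 ≤ RCLike.re (inner 𝕜 (A v) v : 𝕜))
    (hrange : Set.range A ≠ Set.univ)
    (R : ℝ → H →L[𝕜] H)
    (hinv : ∀ γ : ℝ, 0 < γ →
      (A + (γ : 𝕜) • (1 : H →L[𝕜] H)).comp (R γ) = 1 ∧
      (R γ).comp (A + (γ : 𝕜) • (1 : H →L[𝕜] H)) = 1)
    (u : H) (δ : ℝ) (hδ : 0 < δ) :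
    (⨅ γ : {γ : ℝ // 0 < γ},
        Real.sqrt (‖(γ.1 : 𝕜) • R γ.1 u‖ ^ 2 + (δ / γ.1) ^ 2))
      ≤ (⨅ γ : {γ : ℝ // 0 < γ}, ⨆ Δ : {Δ : H // ‖Δ‖ ≤ δ},
        ‖-((γ.1 : 𝕜) • R γ.1 u) + R γ.1 Δ.1‖) ∧
    (⨅ γ : {γ : ℝ // 0 < γ}, ⨆ Δ : {Δ : H // ‖Δ‖ ≤ δ},
        ‖-((γ.1 : 𝕜) • R γ.1 u) + R γ.1 Δ.1‖)
      ≤ (⨅ γ : {γ : ℝ // 0 < γ}, (‖(γ.1 : 𝕜) • R γ.1 u‖ + δ / γ.1)) := by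
  haveI : Nonempty {γ : ℝ // 0 < γ} := ⟨⟨1, one_pos⟩⟩
  haveI hne : Nonempty {Δ : H // ‖Δ‖ ≤ δ} := ⟨⟨0, by simp [hδ.le]⟩⟩
  -- resolvent bound : γ * ‖R γ x‖ ≤ ‖x‖
  have hres : ∀ γ : ℝ, 0 < γ → ∀ x : H, γ * ‖R γ x‖ ≤ ‖x‖ := by
    intro γ hγ x
    set v := R γ x with hv
    have happ : A v + (γ : 𝕜) • v = x := by
      have := congrArg (fun T : H →L[𝕜] H => T x) (hinv γ hγ).1
      simpa [ContinuousLinearMap.comp_apply, ContinuousLinearMap.add_apply,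
        ContinuousLinearMap.smul_apply, ContinuousLinearMap.one_apply] using this
    have h1 : γ * (‖v‖ * ‖v‖) ≤ RCLike.re (inner 𝕜 (A v + (γ : 𝕜) • v) v : 𝕜) := by
      rw [inner_add_left, inner_smul_left, map_add]
      have h2 : RCLike.re ((starRingEnd 𝕜) ((γ : 𝕜)) * (inner 𝕜 v v : 𝕜))
          = γ * (‖v‖ * ‖v‖) := by
        rw [RCLike.conj_ofReal, RCLike.re_ofReal_mul, inner_self_eq_norm_mul_norm]
      rw [h2]
      have := hacc v
      linarith
    rw [happ] at h1
    have h3 : RCLike.re (inner 𝕜 x v : 𝕜) ≤ ‖x‖ * ‖v‖ :=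
      (RCLike.re_le_norm _).trans (norm_inner_le_norm x v)
    rcases eq_or_lt_of_le (norm_nonneg v) with h0 | h0
    · rw [← h0]; simpa using norm_nonneg x
    · nlinarith
  -- near-kernel unit vectors
  have hsmall : ∀ ε : ℝ, 0 < ε → ∃ w : H, ‖w‖ = 1 ∧ ‖A w‖ < ε := by
    intro ε hε
    by_contra hcon
    push_neg at hcon
    have hlb : ∀ x : H, ε * ‖x‖ ≤ ‖A x‖ := by
      intro x
      rcases eq_or_ne x 0 with rfl | hx
      · simp
    
      · have hnx : (0 : ℝ) < ‖x‖ := norm_pos_iff.mpr hx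
        have hw := hcon (((‖x‖⁻¹ : ℝ) : 𝕜) • x)
          (by rw [norm_smul, RCLike.norm_ofReal, abs_of_pos (inv_pos.mpr hnx)]
              field_simp)
        rw [map_smul, norm_smul, RCLike.norm_ofReal, abs_of_pos (inv_pos.mpr hnx)] at hw
        have h2 : ε * ‖x‖ ≤ ‖x‖⁻¹ * ‖A x‖ * ‖x‖ := mul_le_mul_of_nonneg_right hw hnx.le
        have h3 : ‖x‖⁻¹ * ‖A x‖ * ‖x‖ = ‖A x‖ := by field_simp
        linarith
    -- A has closed range
    have hanti : AntilipschitzWith (⟨ε⁻¹, (inv_pos.mpr hε).le⟩ : NNReal) A := by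
      refine A.antilipschitz_of_bound ?_
      intro x
      have h1 := hlb x
      have h2 : ε * ‖x‖ * ε⁻¹ ≤ ‖A x‖ * ε⁻¹ :=
        mul_le_mul_of_nonneg_right h1 (inv_pos.mpr hε).le
      have h3 : ε * ‖x‖ * ε⁻¹ = ‖x‖ := by field_simp
      change ‖x‖ ≤ ε⁻¹ * ‖A x‖
      linarith
    have hclosed : IsClosed (Set.range A) := hanti.isClosed_range A.uniformContinuous
    set K : Submodule 𝕜 H := LinearMap.range (A : H →ₗ[𝕜] H) with hK
    have hKclosed : IsClosed (K : Set H) := by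
      have : (K : Set H) = Set.range A := by
        ext y
        simp [hK, LinearMap.mem_range]
      rw [this]; exact hclosed
    haveI : CompleteSpace K := hKclosed.completeSpace_coe
    have hKne : K ≠ ⊤ := by
      intro htop
      apply hrange
      rw [Set.range_eq_univ]
      exact LinearMap.range_eq_top.mp htop
    have hKorth : Kᗮ ≠ ⊥ := by
      simp only [ne_eq, Submodule.orthogonal_eq_bot_iff]
      exact hKne
    obtain ⟨w, hwK, hw0⟩ := (Submodule.ne_bot_iff Kᗮ).mp hKorth
    have hw_orth : ∀ x : H, (inner 𝕜 (A x) w : 𝕜) = 0 := fun x =>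
      (Submodule.mem_orthogonal K w).mp hwK _ (LinearMap.mem_range.mpr ⟨x, rfl⟩)
    -- show A w = 0
    have hre : ∀ x : H, RCLike.re (inner 𝕜 (A w) x : 𝕜) = 0 := by
      intro x
      set a := RCLike.re (inner 𝕜 (A w) x : 𝕜) with ha
      set b := RCLike.re (inner 𝕜 (A x) x : 𝕜) with hb
      have hb0 : 0 ≤ b := hacc x
      have key : ∀ t : ℝ, 0 ≤ t * a + t ^ 2 * b := by
        intro t
        have h0 := hacc (w + (t : 𝕜) • x)
        have hexp : (inner 𝕜 (A (w + (t : 𝕜) • x)) (w + (t : 𝕜) • x) : 𝕜)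
            = (t : 𝕜) * (inner 𝕜 (A w) x : 𝕜)
              + (starRingEnd 𝕜) ((t : 𝕜)) * ((t : 𝕜) * (inner 𝕜 (A x) x : 𝕜)) := by
          rw [map_add, map_smul]
          rw [inner_add_left, inner_add_right, inner_add_right,
            inner_smul_left, inner_smul_right, inner_smul_right, inner_smul_left]
          rw [hw_orth w, hw_orth x]
          ring
        rw [hexp, map_add] at h0
        have e1 : RCLike.re ((t : 𝕜) * (inner 𝕜 (A w) x : 𝕜)) = t * a := by
          rw [RCLike.re_ofReal_mul]
        have e2 : RCLike.re ((starRingEnd 𝕜) ((t : 𝕜))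
            * ((t : 𝕜) * (inner 𝕜 (A x) x : 𝕜))) = t ^ 2 * b := by
          rw [RCLike.conj_ofReal, ← mul_assoc, ← RCLike.ofReal_mul,
            RCLike.re_ofReal_mul]
          ring
        rw [e1, e2] at h0
        exact h0
      have hbp : (0 : ℝ) < b + 1 := by linarith
      have hk := key (-a / (b + 1))
      have h2 : (0 : ℝ) ≤ (-a / (b + 1) * a + (-a / (b + 1)) ^ 2 * b) * (b + 1) ^ 2 :=
        mul_nonneg hk (sq_nonneg _)
      have h3 : (-a / (b + 1) * a + (-a / (b + 1)) ^ 2 * b) * (b + 1) ^ 2 = -a ^ 2 := by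
        field_simp
        ring
      rw [h3] at h2
      nlinarith [sq_nonneg a]
    have hAw : A w = 0 := by
      have := hre (A w)
      rw [inner_self_eq_norm_mul_norm] at this
      have : ‖A w‖ = 0 := by nlinarith [norm_nonneg (A w)]
      exact norm_eq_zero.mp this
    have := hlb w
    rw [hAw, norm_zero] at this
    have hnw : (0 : ℝ) < ‖w‖ := norm_pos_iff.mpr hw0
    nlinarith
  constructor
  · -- lower bound: R_{δ,2} ≤ Q_δ
    apply ciInf_mono
    · exact ⟨0, by rintro x ⟨γ, rfl⟩; exact Real.sqrt_nonneg _⟩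
    intro γ
    obtain ⟨γ, hγ⟩ := γ
    simp only
    set v := (γ : 𝕜) • R γ u with hv
    set a := ‖v‖ with hA2
    set b := δ / γ with hbdef
    have hb0 : 0 < b := div_pos hδ hγ
    set S := ⨆ Δ : {Δ : H // ‖Δ‖ ≤ δ}, ‖-v + R γ Δ.1‖ with hS
    have hBdd : BddAbove (Set.range fun Δ : {Δ : H // ‖Δ‖ ≤ δ} => ‖-v + R γ Δ.1‖) := by
      refine ⟨a + b, ?_⟩
      rintro x ⟨⟨Δ, hΔ⟩, rfl⟩
      have h1 : ‖R γ Δ‖ ≤ b := by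
        rw [hbdef, le_div_iff₀ hγ]
        have := hres γ hγ Δ
        nlinarith
      calc ‖-v + R γ Δ‖ ≤ ‖-v‖ + ‖R γ Δ‖ := norm_add_le _ _
        _ ≤ a + b := by rw [norm_neg]; exact add_le_add le_rfl h1
    have hmem : ∀ Δ : H, ‖Δ‖ ≤ δ → ‖-v + R γ Δ‖ ≤ S := fun Δ h =>
      le_ciSup hBdd ⟨Δ, h⟩
    have hS0 : 0 ≤ S := Real.iSup_nonneg fun Δ => norm_nonneg _
    have haS : a ≤ S := by
      have := hmem 0 (by simp [hδ.le])
      simpa [norm_neg] using this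
    refine le_of_forall_pos_le_add ?_
    intro η hη
    rcases le_or_gt b η with hbη | hbη
    · -- trivial case
      have h1 : Real.sqrt (a ^ 2 + b ^ 2) ≤ a + b := by
        rw [show a + b = Real.sqrt ((a + b) ^ 2) by
          rw [Real.sqrt_sq (by positivity)]]
        apply Real.sqrt_le_sqrt
        nlinarith [norm_nonneg v, hb0.le]
      linarith
    · -- main case: find Δ with ‖R γ Δ‖ ≥ b - η
      set ε := η * γ ^ 2 / δ with hε
      have hεpos : 0 < ε := by positivity
      obtain ⟨w, hw1, hwA⟩ := hsmall ε hεpos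
      set Δ := ((δ : ℝ) : 𝕜) • w with hΔdef
      have hΔnorm : ‖Δ‖ = δ := by
        rw [hΔdef, norm_smul, RCLike.norm_ofReal, abs_of_pos hδ, hw1, mul_one]
      -- ‖γ • R γ w‖ ≥ 1 - ε / γ
      have happ : R γ (A w) + (γ : 𝕜) • R γ w = w := by
        have := congrArg (fun T : H →L[𝕜] H => T w) (hinv γ hγ).2
        simpa [ContinuousLinearMap.comp_apply, ContinuousLinearMap.add_apply,
          ContinuousLinearMap.smul_apply, ContinuousLinearMap.one_apply, map_add,
          map_smul] using this
      have hRAw : ‖R γ (A w)‖ ≤ ε / γ := by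
        rw [le_div_iff₀ hγ]
        have := hres γ hγ (A w)
        nlinarith
      have hlow : 1 - ε / γ ≤ γ * ‖R γ w‖ := by
        have h1 : ‖(γ : 𝕜) • R γ w‖ = γ * ‖R γ w‖ := by
          rw [norm_smul, RCLike.norm_ofReal, abs_of_pos hγ]
        have h2 : (γ : 𝕜) • R γ w = w - R γ (A w) := eq_sub_of_add_eq' happ
        have h3 := norm_sub_norm_le w (R γ (A w))
        rw [hw1] at h3
        rw [← h1, h2]
        linarith
      have hRΔ : b - η ≤ ‖R γ Δ‖ := by
        have h1 : R γ Δ = ((δ : ℝ) : 𝕜) • R γ w := by rw [hΔdef, map_smul]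
        have h2 : ‖R γ Δ‖ = δ * ‖R γ w‖ := by
          rw [h1, norm_smul, RCLike.norm_ofReal, abs_of_pos hδ]
        rw [h2]
        -- from hlow : γ ‖Rγ w‖ ≥ 1 - ε/γ, so δ‖Rγ w‖ ≥ δ/γ - δε/γ² = b - η
        have hγ2 : (0 : ℝ) < γ ^ 2 := by positivity
        have key : δ * (ε / γ) / γ = η := by
          rw [hε]; field_simp
        have h4 : δ * (1 - ε / γ) / γ ≤ δ * ‖R γ w‖ := by
          rw [div_le_iff₀ hγ]
          nlinarith
        have h5 : δ * (1 - ε / γ) / γ = b - η := by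
          rw [hbdef, ← key]; field_simp
        linarith [h5 ▸ h4]
      have hbη0 : 0 ≤ b - η := by linarith
      -- parallelogram
      set x := R γ Δ with hx
      have hS1 : ‖-v + x‖ ≤ S := hmem Δ (le_of_eq hΔnorm)
      have hS2 : ‖-v - x‖ ≤ S := by
        have h1 : ‖-Δ‖ ≤ δ := by rw [norm_neg, hΔnorm]
        have := hmem (-Δ) h1
        rw [map_neg] at this
        simpa [sub_eq_add_neg] using this
      have hpar := parallelogram_law_with_norm 𝕜 (-v) x
      have hnv : ‖-v‖ = a := norm_neg v
      have hSsq : a ^ 2 + (b - η) ^ 2 ≤ S ^ 2 := by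
        have e1 : ‖-v + x‖ * ‖-v + x‖ ≤ S * S :=
          mul_le_mul hS1 hS1 (norm_nonneg _) hS0
        have e2 : ‖-v - x‖ * ‖-v - x‖ ≤ S * S :=
          mul_le_mul hS2 hS2 (norm_nonneg _) hS0
        have e3 : (b - η) * (b - η) ≤ ‖x‖ * ‖x‖ :=
          mul_le_mul hRΔ hRΔ hbη0 (norm_nonneg _)
        nlinarith [hpar, hnv]
      have hSs : Real.sqrt (a ^ 2 + (b - η) ^ 2) ≤ S := by
        rw [show S = Real.sqrt (S ^ 2) by rw [Real.sqrt_sq hS0]]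
        exact Real.sqrt_le_sqrt hSsq
      set s := Real.sqrt (a ^ 2 + (b - η) ^ 2) with hs
      have hs0 : 0 ≤ s := Real.sqrt_nonneg _
      have hs2 : s ^ 2 = a ^ 2 + (b - η) ^ 2 := Real.sq_sqrt (by positivity)
      have hsge : b - η ≤ s := by
        rw [show b - η = Real.sqrt ((b - η) ^ 2) by rw [Real.sqrt_sq hbη0]]
        apply Real.sqrt_le_sqrt
        nlinarith [sq_nonneg a]
      have hfinal : Real.sqrt (a ^ 2 + b ^ 2) ≤ s + η := by
        rw [show s + η = Real.sqrt ((s + η) ^ 2) by rw [Real.sqrt_sq (by linarith)]]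
        apply Real.sqrt_le_sqrt
        nlinarith
      linarith
  · -- upper bound: Q_δ ≤ R_{δ,1}
    apply ciInf_mono
    · exact ⟨0, by
        rintro x ⟨γ, rfl⟩
        exact Real.iSup_nonneg fun Δ => norm_nonneg _⟩
    intro γ
    obtain ⟨γ, hγ⟩ := γ
    simp only
    apply ciSup_le
    rintro ⟨Δ, hΔ⟩
    simp only
    have h1 : ‖R γ Δ‖ ≤ δ / γ := by
      rw [le_div_iff₀ hγ]
      have := hres γ hγ Δ
      nlinarith
    calc ‖-((γ : 𝕜) • R γ u) + R γ Δ‖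
        ≤ ‖-((γ : 𝕜) • R γ u)‖ + ‖R γ Δ‖ := norm_add_le _ _
      _ ≤ ‖(γ : 𝕜) • R γ u‖ + δ / γ := by rw [norm_neg]; exact add_le_add le_rfl h1
end

section
/- Let A be an accretive bounded linear operator on a Hilbert space H with R(A) ≠ H. For parameters 0 < ε ≤ γ and any v ∈ H with ‖v‖ = 1 and ‖Av‖ = ε, one has ‖(A + γI)⁻¹ v‖ ≥ (1 - ε/γ) · (1/γ). -/
open Filter Asymptotics
open scoped Topology

/-- let `A` be accretive on a Hilbert space `H` with `R(A) ≠ H`, and let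
`R γ = (A + γ I)⁻¹`. For `0 < ε ≤ γ` and `v ∈ H` with `‖v‖ = 1` and `‖A v‖ = ε`, one has
`‖(A + γ I)⁻¹ v‖ ≥ (1 - ε/γ) / γ`. -/
theorem accretive_resolvent_maximize
    {𝕜 : Type*} [RCLike 𝕜] {H : Type*} [NormedAddCommGroup H]
    [InnerProductSpace 𝕜 H] [CompleteSpace H]
    (A : H →L[𝕜] H)
    (hacc : ∀ v : H, 0 ≤ RCLike.re (inner 𝕜 (A v) v : 𝕜))
    (hrange : Set.range A ≠ Set.univ)
    (R : ℝ → H →L[𝕜] H)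
    (hinv : ∀ γ : ℝ, 0 < γ →
      (A + (γ : 𝕜) • (1 : H →L[𝕜] H)).comp (R γ) = 1 ∧
      (R γ).comp (A + (γ : 𝕜) • (1 : H →L[𝕜] H)) = 1)
    (ε γ : ℝ) (hε : 0 < ε) (hεγ : ε ≤ γ)
    (v : H) (hv : ‖v‖ = 1) (hAv : ‖A v‖ = ε) :
    (1 - ε / γ) * (1 / γ) ≤ ‖R γ v‖ := by
  have hγ : 0 < γ := lt_of_lt_of_le hε hεγ
  obtain ⟨h1, h2⟩ := hinv γ hγ
  -- resolvent bound : ‖R γ w‖ ≤ ‖w‖ / γ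
  have hbound : ∀ w : H, ‖R γ w‖ ≤ ‖w‖ / γ := by
    intro w
    set u := R γ w with hu
    have hAu : A u + (γ : 𝕜) • u = w := by
      have := congrArg (fun T : H →L[𝕜] H => T w) h1
      simpa [ContinuousLinearMap.comp_apply, ContinuousLinearMap.add_apply,
        ContinuousLinearMap.smul_apply] using this
    have key : γ * ‖u‖ ^ 2 ≤ ‖w‖ * ‖u‖ := by
      have h3 : RCLike.re (inner 𝕜 (A u + (γ : 𝕜) • u) u : 𝕜)
          = RCLike.re (inner 𝕜 (A u) u : 𝕜) + γ * ‖u‖ ^ 2 := by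
        rw [inner_add_left, inner_smul_left]
        simp [RCLike.mul_re, inner_self_eq_norm_sq, sq]
      have h4 : RCLike.re (inner 𝕜 w u : 𝕜) ≤ ‖w‖ * ‖u‖ := by
        calc RCLike.re (inner 𝕜 w u : 𝕜) ≤ ‖(inner 𝕜 w u : 𝕜)‖ :=
              RCLike.re_le_norm _
          _ ≤ ‖w‖ * ‖u‖ := norm_inner_le_norm _ _
      have h5 : RCLike.re (inner 𝕜 w u : 𝕜)
          = RCLike.re (inner 𝕜 (A u) u : 𝕜) + γ * ‖u‖ ^ 2 := hAu ▸ h3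
      have := hacc u
      linarith
    rcases eq_or_ne u 0 with h | h
    · simp [h]; positivity
    · have hupos : 0 < ‖u‖ := norm_pos_iff.mpr h
      rw [div_eq_inv_mul]
      show ‖u‖ ≤ γ⁻¹ * ‖w‖
      rw [le_inv_mul_iff₀ hγ]
      nlinarith [key]
  -- identity : γ • R γ v = v - R γ (A v)
  have hid : (γ : 𝕜) • R γ v = v - R γ (A v) := by
    have := congrArg (fun T : H →L[𝕜] H => T v) h2
    simp only [ContinuousLinearMap.comp_apply, ContinuousLinearMap.add_apply,
      ContinuousLinearMap.smul_apply, ContinuousLinearMap.one_apply,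
      ContinuousLinearMap.map_add, ContinuousLinearMap.map_smul] at this
    rw [eq_sub_iff_add_eq]
    rw [add_comm]
    exact this
  have hnorm : γ * ‖R γ v‖ = ‖v - R γ (A v)‖ := by
    rw [← hid, norm_smul]
    congr 1
    simp [abs_of_pos hγ]
  have hlow : 1 - ε / γ ≤ ‖v - R γ (A v)‖ := by
    have h5 : ‖R γ (A v)‖ ≤ ε / γ := by
      simpa [hAv] using hbound (A v)
    have h6 := norm_sub_norm_le v (R γ (A v))
    rw [hv] at h6
    linarith
  have h7 : 1 - ε / γ ≤ γ * ‖R γ v‖ := hnorm ▸ hlow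
  rw [mul_one_div, div_le_iff₀ hγ]
  linarith
end

section
/- Let A be an accretive bounded linear operator on a Hilbert space H, and let u ∈ H with u not in the range of A and u not in the nullspace of A. For β > 0 set φ_β = (A + βI)⁻¹u / ‖(A + βI)⁻¹u‖. Then for every real number ε with 0 < ε < ‖Au‖/‖u‖ there exists β > 0 such that ‖A φ_β‖ = ε. -/
open Filter Asymptotics RCLike
open scoped Topology

section AccretiveAux

variable {𝕜 : Type*} [RCLike 𝕜] {H : Type*} [NormedAddCommGroup H]
  [InnerProductSpace 𝕜 H] [CompleteSpace H]

private lemma acc_res_id (A : H →L[𝕜] H) (R : ℝ → H →L[𝕜] H)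
    (hinv : ∀ γ : ℝ, 0 < γ →
      (A + (γ : 𝕜) • (1 : H →L[𝕜] H)).comp (R γ) = 1 ∧
      (R γ).comp (A + (γ : 𝕜) • (1 : H →L[𝕜] H)) = 1)
    {β : ℝ} (hβ : 0 < β) (x : H) :
    A (R β x) + (β : 𝕜) • (R β x) = x := by
  have h := congrArg (fun T : H →L[𝕜] H => T x) (hinv β hβ).1
  simpa using h

private lemma acc_res_bound (A : H →L[𝕜] H)
    (hacc : ∀ v : H, 0 ≤ RCLike.re (inner 𝕜 (A v) v : 𝕜))
    {β : ℝ} (hβ : 0 < β) {x y : H} (hid : A y + (β : 𝕜) • y = x) :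
    ‖y‖ ≤ ‖x‖ / β := by
  have h1 : β * ‖y‖ ^ 2 ≤ re (inner 𝕜 x y : 𝕜) := by
    rw [← hid]
    simp only [inner_add_left, inner_smul_left, RCLike.conj_ofReal, map_add,
      inner_self_eq_norm_sq_to_K, RCLike.re_ofReal_mul, ← RCLike.ofReal_pow, RCLike.ofReal_re]
    have := hacc y
    linarith
  have h2 : re (inner 𝕜 x y : 𝕜) ≤ ‖x‖ * ‖y‖ := re_inner_le_norm x y
  rcases eq_or_lt_of_le (norm_nonneg y) with h | h
  · rw [← h]; positivity
  · rw [le_div_iff₀ hβ]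
    nlinarith

private lemma acc_key (A : H →L[𝕜] H)
    (hacc : ∀ v : H, 0 ≤ RCLike.re (inner 𝕜 (A v) v : 𝕜))
    (R : ℝ → H →L[𝕜] H)
    (hinv : ∀ γ : ℝ, 0 < γ →
      (A + (γ : 𝕜) • (1 : H →L[𝕜] H)).comp (R γ) = 1 ∧
      (R γ).comp (A + (γ : 𝕜) • (1 : H →L[𝕜] H)) = 1)
    (u : H) {β γ : ℝ} (hβ : 0 < β) (hγ : 0 < γ) :
    β * ‖R β u‖ ^ 2 + γ * ‖R γ u‖ ^ 2
      ≤ (β + γ) * re (inner 𝕜 (R β u) (R γ u) : 𝕜) := by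
  set x := R β u
  set y := R γ u
  have hx : A x = u - (β : 𝕜) • x := eq_sub_of_add_eq (acc_res_id A R hinv hβ u)
  have hy : A y = u - (γ : 𝕜) • y := eq_sub_of_add_eq (acc_res_id A R hinv hγ u)
  have h : (0:ℝ) ≤ re (inner 𝕜 ((γ:𝕜) • y - (β:𝕜) • x) (x - y) : 𝕜) := by
    have := hacc (x - y)
    rwa [map_sub, hx, hy, sub_sub_sub_cancel_left] at this
  have h1 : re (inner 𝕜 y x : 𝕜) = re (inner 𝕜 x y : 𝕜) := by
    rw [← inner_conj_symm]; exact RCLike.conj_re _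
  simp only [inner_sub_left, inner_sub_right, inner_smul_left, RCLike.conj_ofReal,
    map_sub, map_add, inner_self_eq_norm_sq_to_K] at h
  simp only [RCLike.re_ofReal_mul, ← RCLike.ofReal_pow, RCLike.ofReal_re] at h
  rw [h1] at h
  linarith

private lemma acc_antitone (A : H →L[𝕜] H)
    (hacc : ∀ v : H, 0 ≤ RCLike.re (inner 𝕜 (A v) v : 𝕜))
    (R : ℝ → H →L[𝕜] H)
    (hinv : ∀ γ : ℝ, 0 < γ →
      (A + (γ : 𝕜) • (1 : H →L[𝕜] H)).comp (R γ) = 1 ∧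
      (R γ).comp (A + (γ : 𝕜) • (1 : H →L[𝕜] H)) = 1)
    (u : H) {β γ : ℝ} (hγ : 0 < γ) (hγβ : γ ≤ β) :
    ‖R β u‖ ≤ ‖R γ u‖ := by
  have hβ : 0 < β := lt_of_lt_of_le hγ hγβ
  have hk := acc_key A hacc R hinv u hβ hγ
  have hr : re (inner 𝕜 (R β u) (R γ u) : 𝕜) ≤ ‖R β u‖ * ‖R γ u‖ := re_inner_le_norm _ _
  by_contra hab
  push_neg at hab
  have ha0 : 0 < ‖R β u‖ := lt_of_le_of_lt (norm_nonneg _) hab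
  have hsum : (0:ℝ) < β + γ := by linarith
  have hk2 : β * ‖R β u‖ ^ 2 + γ * ‖R γ u‖ ^ 2 ≤ (β + γ) * (‖R β u‖ * ‖R γ u‖) :=
    le_trans hk (mul_le_mul_of_nonneg_left hr hsum.le)
  nlinarith [mul_pos hγ (mul_pos (sub_pos.mpr hab) (sub_pos.mpr hab)),
    mul_nonneg (mul_nonneg (sub_nonneg.mpr hγβ) ha0.le) (sub_pos.mpr hab).le]

private lemma acc_dist_sq (A : H →L[𝕜] H)
    (hacc : ∀ v : H, 0 ≤ RCLike.re (inner 𝕜 (A v) v : 𝕜))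
    (R : ℝ → H →L[𝕜] H)
    (hinv : ∀ γ : ℝ, 0 < γ →
      (A + (γ : 𝕜) • (1 : H →L[𝕜] H)).comp (R γ) = 1 ∧
      (R γ).comp (A + (γ : 𝕜) • (1 : H →L[𝕜] H)) = 1)
    (u : H) {β γ : ℝ} (hγ : 0 < γ) (hγβ : γ ≤ β) :
    ‖R β u - R γ u‖ ^ 2 ≤ ‖R γ u‖ ^ 2 - ‖R β u‖ ^ 2 := by
  have hβ : 0 < β := lt_of_lt_of_le hγ hγβ
  have hk := acc_key A hacc R hinv u hβ hγ
  have hmon := acc_antitone A hacc R hinv u hγ hγβ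
  have hb2 : ‖R β u‖ ^ 2 ≤ ‖R γ u‖ ^ 2 := pow_le_pow_left₀ (norm_nonneg _) hmon 2
  have hns := norm_sub_sq (𝕜 := 𝕜) (R β u) (R γ u)
  have hsum : (0:ℝ) < β + γ := by linarith
  -- from hk : (β+γ) * re ≥ β a² + γ b² ≥ (β+γ) a², hence re ≥ a²
  have hre : ‖R β u‖ ^ 2 ≤ re (inner 𝕜 (R β u) (R γ u) : 𝕜) := by
    nlinarith
  linarith

private lemma acc_res_continuousOn (A : H →L[𝕜] H) (R : ℝ → H →L[𝕜] H)
    (hinv : ∀ γ : ℝ, 0 < γ →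
      (A + (γ : 𝕜) • (1 : H →L[𝕜] H)).comp (R γ) = 1 ∧
      (R γ).comp (A + (γ : 𝕜) • (1 : H →L[𝕜] H)) = 1)
    (u : H) :
    ContinuousOn (fun β : ℝ => R β u) (Set.Ioi 0) := by
  have hT : Continuous (fun β : ℝ => A + (β : 𝕜) • (1 : H →L[𝕜] H)) :=
    continuous_const.add ((RCLike.continuous_ofReal (K := 𝕜)).smul (continuous_const (y := (1 : H →L[𝕜] H))))
  have heq : ∀ γ ∈ Set.Ioi (0:ℝ), Ring.inverse (A + (γ : 𝕜) • (1 : H →L[𝕜] H)) = R γ := by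
    intro γ hγ
    set w : (H →L[𝕜] H)ˣ :=
      { val := A + (γ : 𝕜) • (1 : H →L[𝕜] H)
        inv := R γ
        val_inv := (hinv γ hγ).1
        inv_val := (hinv γ hγ).2 } with hw
    have : Ring.inverse ((w : H →L[𝕜] H)) = ↑w⁻¹ := Ring.inverse_unit w
    simpa [hw] using this
  intro β hβ
  have hβ0 : (0:ℝ) < β := hβ
  set Tu : (H →L[𝕜] H)ˣ :=
    { val := A + (β : 𝕜) • (1 : H →L[𝕜] H)
      inv := R β
      val_inv := (hinv β hβ0).1
      inv_val := (hinv β hβ0).2 }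
  have hinvc : ContinuousAt Ring.inverse ((A + (β : 𝕜) • (1 : H →L[𝕜] H) : H →L[𝕜] H)) :=
    NormedRing.inverse_continuousAt Tu
  have h2 : ContinuousAt (fun β : ℝ =>
      Ring.inverse (A + (β : 𝕜) • (1 : H →L[𝕜] H))) β :=
    ContinuousAt.comp (x := β) (g := Ring.inverse) hinvc hT.continuousAt
  have hca : ContinuousAt (fun β : ℝ =>
      Ring.inverse (A + (β : 𝕜) • (1 : H →L[𝕜] H)) u) β :=
    ContinuousAt.comp (x := β) (g := fun T : H →L[𝕜] H => T u)
      ((ContinuousLinearMap.apply 𝕜 H u).continuous.continuousAt) h2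
  exact hca.continuousWithinAt.congr (fun γ hγ => by rw [heq γ hγ]) (by rw [heq β hβ])

end AccretiveAux

/-- let `A` be accretive on a Hilbert space `H`, `R γ = (A + γ I)⁻¹`, and
`u ∈ H` with `u ∉ R(A)` and `A u ≠ 0`. Setting `φ_β = (A + β I)⁻¹ u / ‖(A + β I)⁻¹ u‖`,
for every `0 < ε < ‖A u‖ / ‖u‖` there is `β > 0` with `‖A φ_β‖ = ε`. -/
theorem accretive_normalized_resolvent_intermediate_value
    {𝕜 : Type*} [RCLike 𝕜] {H : Type*} [NormedAddCommGroup H]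
    [InnerProductSpace 𝕜 H] [CompleteSpace H]
    (A : H →L[𝕜] H)
    (hacc : ∀ v : H, 0 ≤ RCLike.re (inner 𝕜 (A v) v : 𝕜))
    (R : ℝ → H →L[𝕜] H)
    (hinv : ∀ γ : ℝ, 0 < γ →
      (A + (γ : 𝕜) • (1 : H →L[𝕜] H)).comp (R γ) = 1 ∧
      (R γ).comp (A + (γ : 𝕜) • (1 : H →L[𝕜] H)) = 1)
    (u : H) (hu_range : u ∉ Set.range A) (hu_ker : A u ≠ 0) :
    ∀ ε : ℝ, 0 < ε → ε < ‖A u‖ / ‖u‖ →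
      ∃ β : ℝ, 0 < β ∧ ‖A ((‖R β u‖ : 𝕜)⁻¹ • R β u)‖ = ε := by
  intro ε hε hlt
  have hu0 : u ≠ 0 := fun h => hu_ker (by rw [h, map_zero])
  have hu0' : 0 < ‖u‖ := norm_pos_iff.mpr hu0
  set g : ℝ → ℝ := fun β => ‖A (R β u)‖ / ‖R β u‖ with hg
  have hRpos : ∀ β : ℝ, 0 < β → 0 < ‖R β u‖ := by
    intro β hβ
    rw [norm_pos_iff]
    intro h0
    apply hu0
    have := acc_res_id A R hinv hβ u
    rw [h0] at this
    simpa using this.symm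
  have hgoal_eq : ∀ β : ℝ, 0 < β → ‖A ((‖R β u‖ : 𝕜)⁻¹ • R β u)‖ = g β := by
    intro β hβ
    rw [map_smul, norm_smul, norm_inv, RCLike.norm_ofReal, abs_of_nonneg (norm_nonneg _),
      inv_mul_eq_div]
  -- Step A : there is β₀ with g β₀ ≤ ε
  have hstepA : ∃ β₀ : ℝ, 0 < β₀ ∧ g β₀ ≤ ε := by
    by_contra hcon
    push_neg at hcon
    set C : ℝ := 2 * ‖u‖ / ε with hC
    have hbd : ∀ β : ℝ, 0 < β → β ≤ ε / 2 → ‖R β u‖ ≤ C := by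
      intro β hβ hβε
      have hgβ := hcon β hβ
      have hRp := hRpos β hβ
      have h1 : ε * ‖R β u‖ < ‖A (R β u)‖ := by
        have := (lt_div_iff₀ hRp).mp hgβ
        linarith
      have h2 : ‖A (R β u)‖ ≤ ‖u‖ + β * ‖R β u‖ := by
        have hx : A (R β u) = u - (β : 𝕜) • R β u :=
          eq_sub_of_add_eq (acc_res_id A R hinv hβ u)
        calc ‖A (R β u)‖ = ‖u - (β : 𝕜) • R β u‖ := by rw [hx]
          _ ≤ ‖u‖ + ‖(β : 𝕜) • R β u‖ := norm_sub_le _ _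
          _ = ‖u‖ + β * ‖R β u‖ := by
              rw [norm_smul, RCLike.norm_ofReal, abs_of_pos hβ]
      have h3 : β * ‖R β u‖ ≤ (ε / 2) * ‖R β u‖ :=
        mul_le_mul_of_nonneg_right hβε (norm_nonneg _)
      rw [hC, le_div_iff₀ hε]
      linarith
    -- parameter sequence tending to 0
    set s : ℕ → ℝ := fun n => (ε / 2) * (1 / (n + 1)) with hs
    have hspos : ∀ n, 0 < s n := by
      intro n
      apply mul_pos (by linarith)
      positivity
    have hsanti : ∀ {n m : ℕ}, n ≤ m → s m ≤ s n := by
      intro n m hnm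
      have h1 : (0:ℝ) < (n:ℝ) + 1 := by positivity
      have h2 : (n:ℝ) + 1 ≤ (m:ℝ) + 1 := by exact_mod_cast Nat.succ_le_succ hnm
      exact mul_le_mul_of_nonneg_left (one_div_le_one_div_of_le h1 h2) (by linarith)
    have hsle : ∀ n, s n ≤ ε / 2 := by
      intro n
      have := hsanti (Nat.zero_le n)
      simpa [hs] using this
    have hs0 : Tendsto s atTop (𝓝 0) := by
      have := tendsto_one_div_add_atTop_nhds_zero_nat.const_mul (ε / 2)
      simpa [hs] using this
    set N : ℕ → ℝ := fun n => ‖R (s n) u‖ with hN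
    have hNmono : Monotone N :=
      fun n m hnm => acc_antitone A hacc R hinv u (hspos m) (hsanti hnm)
    have hNbdd : BddAbove (Set.range N) := by
      refine ⟨C, ?_⟩
      rintro _ ⟨n, rfl⟩
      exact hbd (s n) (hspos n) (hsle n)
    set L : ℝ := ⨆ n, N n with hL
    have hNlim : Tendsto N atTop (𝓝 L) := tendsto_atTop_ciSup hNmono hNbdd
    have hNle : ∀ n, N n ≤ L := fun n => le_ciSup hNbdd n
    have hcauchy : CauchySeq (fun n => R (s n) u) := by
      apply cauchySeq_of_le_tendsto_0 (b := fun k => Real.sqrt (L ^ 2 - N k ^ 2))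
      · intro n m k hkn hkm
        wlog hnm : m ≤ n generalizing n m
        · rw [dist_comm]
          exact this m n hkm hkn (by omega)
        have hd := acc_dist_sq A hacc R hinv u (hspos n) (hsanti hnm)
        have hL2 : N n ^ 2 ≤ L ^ 2 :=
          pow_le_pow_left₀ (norm_nonneg _) (hNle n) 2
        have hk2 : N k ^ 2 ≤ N m ^ 2 :=
          pow_le_pow_left₀ (norm_nonneg _) (hNmono hkm) 2
        rw [dist_eq_norm, norm_sub_rev]
        rw [Real.le_sqrt (norm_nonneg _) (by nlinarith)]
        linarith
      · have h1 : Tendsto (fun k => L ^ 2 - N k ^ 2) atTop (𝓝 (L ^ 2 - L ^ 2)) :=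
          tendsto_const_nhds.sub (hNlim.pow 2)
        rw [sub_self] at h1
        have h2 := (Real.continuous_sqrt.tendsto 0).comp h1
        simpa [Function.comp_def] using h2
    obtain ⟨w, hw⟩ := cauchySeq_tendsto_of_complete hcauchy
    have hAv : Tendsto (fun n => A (R (s n) u)) atTop (𝓝 (A w)) :=
      (A.continuous.tendsto w).comp hw
    have hsmall : Tendsto (fun n => ((s n : 𝕜)) • R (s n) u) atTop (𝓝 0) := by
      apply squeeze_zero_norm (a := fun n => s n * C)
      · intro n
        rw [norm_smul, RCLike.norm_ofReal, abs_of_pos (hspos n)]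
        exact mul_le_mul_of_nonneg_left (hbd _ (hspos n) (hsle n)) (hspos n).le
      · have h0 := hs0.mul_const C
        rw [zero_mul] at h0
        exact h0
    have hAv' : Tendsto (fun n => A (R (s n) u)) atTop (𝓝 u) := by
      have heq : (fun n => A (R (s n) u)) = fun n => u - (s n : 𝕜) • R (s n) u := by
        funext n
        exact eq_sub_of_add_eq (acc_res_id A R hinv (hspos n) u)
      rw [heq]
      simpa using tendsto_const_nhds.sub hsmall
    exact hu_range ⟨w, tendsto_nhds_unique hAv hAv'⟩
  -- Step B : arbitrarily large β₁ with ε ≤ g β₁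
  have hstepB : ∀ B : ℝ, 0 < B → ∃ β₁ : ℝ, B < β₁ ∧ ε ≤ g β₁ := by
    intro B hB
    have hAop : 0 < ‖A‖ := by
      by_contra h
      push_neg at h
      apply hu_ker
      have h1 := A.le_opNorm u
      have h2 : ‖A‖ * ‖u‖ ≤ 0 := mul_nonpos_of_nonpos_of_nonneg h (norm_nonneg _)
      have : ‖A u‖ = 0 := le_antisymm (le_trans h1 h2) (norm_nonneg _)
      exact norm_eq_zero.mp this
    have hnum : 0 < ‖A u‖ - ε * ‖u‖ := by
      have := (lt_div_iff₀ hu0').mp hlt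
      linarith
    set δ : ℝ := (‖A u‖ - ε * ‖u‖) / (2 * (‖A‖ + ε)) with hδ
    have hδpos : 0 < δ := div_pos hnum (by positivity)
    set β₁ : ℝ := max (B + 1) (‖A u‖ / δ + 1) with hβ₁
    have hβ₁B : B < β₁ := lt_of_lt_of_le (by linarith) (le_max_left _ _)
    have hβ₁pos : 0 < β₁ := lt_trans hB hβ₁B
    have hres : ‖A u‖ / β₁ ≤ δ := by
      have h1 : ‖A u‖ / δ + 1 ≤ β₁ := le_max_right _ _
      rw [div_le_iff₀ hβ₁pos]
      have h2 : δ * (‖A u‖ / δ + 1) = ‖A u‖ + δ := by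
        field_simp
      nlinarith [mul_le_mul_of_nonneg_left h1 hδpos.le]
    set w : H := (β₁ : 𝕜) • R β₁ u with hwdef
    have hwu : R β₁ (A u) = u - w := by
      have h1 : R β₁ (A u + (β₁ : 𝕜) • u) = u := by
        have := congrArg (fun T : H →L[𝕜] H => T u) (hinv β₁ hβ₁pos).2
        simpa using this
      rw [map_add, map_smul] at h1
      exact eq_sub_of_add_eq h1
    have hdist : ‖u - w‖ ≤ δ := by
      rw [← hwu]
      exact le_trans
        (acc_res_bound A hacc hβ₁pos (acc_res_id A R hinv hβ₁pos (A u))) hres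
    have hAw : ‖A u‖ - ‖A‖ * δ ≤ ‖A w‖ := by
      have h1 : ‖A u - A w‖ ≤ ‖A‖ * δ := by
        rw [← map_sub]
        exact le_trans (A.le_opNorm _) (mul_le_mul_of_nonneg_left hdist (norm_nonneg A))
      have h2 := norm_sub_norm_le (A u) (A w)
      linarith
    have hwnorm : ‖w‖ ≤ ‖u‖ + δ := by
      have h1 : ‖w‖ - ‖u‖ ≤ ‖w - u‖ := norm_sub_norm_le w u
      rw [norm_sub_rev] at h1
      linarith
    have hwpos : 0 < ‖w‖ := by
      rw [hwdef, norm_smul, RCLike.norm_ofReal, abs_of_pos hβ₁pos]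
      exact mul_pos hβ₁pos (hRpos β₁ hβ₁pos)
    have hgval : g β₁ = ‖A w‖ / ‖w‖ := by
      rw [hg]
      simp only [hwdef, map_smul, norm_smul, RCLike.norm_ofReal, abs_of_pos hβ₁pos]
      rw [mul_div_mul_left _ _ (ne_of_gt hβ₁pos)]
    refine ⟨β₁, hβ₁B, ?_⟩
    rw [hgval, le_div_iff₀ hwpos]
    have hεδ : δ * (2 * (‖A‖ + ε)) = ‖A u‖ - ε * ‖u‖ := by
      rw [hδ]
      field_simp
    nlinarith [mul_le_mul_of_nonneg_left hwnorm hε.le,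
      mul_nonneg hδpos.le hAop.le, mul_nonneg hδpos.le hε.le]
  -- combine via the intermediate value theorem
  obtain ⟨β₀, hβ₀pos, hgβ₀⟩ := hstepA
  obtain ⟨β₁, hβ₁gt, hgβ₁⟩ := hstepB β₀ hβ₀pos
  have hsub : Set.Icc β₀ β₁ ⊆ Set.Ioi 0 := fun x hx => lt_of_lt_of_le hβ₀pos hx.1
  have hvcont := (acc_res_continuousOn A R hinv u).mono hsub
  have hgcont : ContinuousOn g (Set.Icc β₀ β₁) := by
    apply ContinuousOn.div
    · exact (A.continuous.comp_continuousOn hvcont).norm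
    · exact hvcont.norm
    · intro x hx
      exact ne_of_gt (hRpos x (hsub hx))
  have hmem : ε ∈ Set.Icc (g β₀) (g β₁) := ⟨hgβ₀, hgβ₁⟩
  obtain ⟨β, hβmem, hβval⟩ := intermediate_value_Icc hβ₁gt.le hgcont hmem
  have hβpos : 0 < β := lt_of_lt_of_le hβ₀pos hβmem.1
  exact ⟨β, hβpos, by rw [hgoal_eq β hβpos]; exact hβval⟩
end

section
/- Let A be a nonnegative bounded linear operator on a Banach space X, and let u ∈ X lie in the closure of the range of A. Define P_δ(u) = sup over Δ ∈ X with ‖Δ‖ ≤ δ of the inf over γ > 0 of ‖-γ(A + γI)⁻¹u + (A + γI)⁻¹Δ‖. Then P_δ(u) → 0 as δ → 0 from the right. -/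
open Filter Asymptotics
open scoped Topology

private lemma smul_R_bound {X : Type*} [NormedAddCommGroup X] [NormedSpace ℝ X]
    (M : ℝ) (R : ℝ → X →L[ℝ] X) (hnorm : ∀ γ : ℝ, 0 < γ → ‖R γ‖ ≤ M / γ)
    {γ : ℝ} (hγ : 0 < γ) (x : X) : ‖γ • R γ x‖ ≤ M * ‖x‖ := by
  rw [norm_smul, Real.norm_eq_abs, abs_of_pos hγ]
  calc γ * ‖R γ x‖ ≤ γ * (‖R γ‖ * ‖x‖) :=
        mul_le_mul_of_nonneg_left ((R γ).le_opNorm x) hγ.le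
    _ ≤ γ * ((M / γ) * ‖x‖) :=
        mul_le_mul_of_nonneg_left (mul_le_mul_of_nonneg_right (hnorm γ hγ) (norm_nonneg x)) hγ.le
    _ = M * ‖x‖ := by field_simp

private lemma key_small {X : Type*} [NormedAddCommGroup X] [NormedSpace ℝ X]
    (A : X →L[ℝ] X) (M : ℝ) (hM : 1 ≤ M) (R : ℝ → X →L[ℝ] X)
    (hinv : ∀ γ : ℝ, 0 < γ →
      (A + γ • (1 : X →L[ℝ] X)).comp (R γ) = 1 ∧
      (R γ).comp (A + γ • (1 : X →L[ℝ] X)) = 1)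
    (hnorm : ∀ γ : ℝ, 0 < γ → ‖R γ‖ ≤ M / γ)
    (u : X) (hu : u ∈ closure (Set.range A)) :
    ∀ ε : ℝ, 0 < ε → ∃ γ : ℝ, 0 < γ ∧ ‖γ • R γ u‖ ≤ ε := by
  intro ε hε
  have hM0 : 0 < M := lt_of_lt_of_le one_pos hM
  obtain ⟨y, ⟨w, rfl⟩, hdist⟩ := Metric.mem_closure_iff.1 hu (ε / (2 * M)) (by positivity)
  set γ := ε / (2 * (1 + M) * (‖w‖ + 1)) with hγdef
  have hw0 : (0:ℝ) ≤ ‖w‖ := norm_nonneg w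
  have hγ : 0 < γ := by positivity
  refine ⟨γ, hγ, ?_⟩
  -- resolvent identity: R γ (A w) = w - γ • R γ w
  have hRw : R γ (A w) = w - γ • R γ w := by
    have h := (hinv γ hγ).2
    have h1 : R γ ((A + γ • (1 : X →L[ℝ] X)) w) = w := by
      rw [← ContinuousLinearMap.comp_apply, h]; rfl
    have h2 : (A + γ • (1 : X →L[ℝ] X)) w = A w + γ • w := by
      simp [ContinuousLinearMap.add_apply]
    rw [h2, map_add, map_smul] at h1
    exact eq_sub_of_add_eq h1
  have hdecomp : γ • R γ u = γ • R γ (u - A w) + (γ • w - γ • (γ • R γ w)) := by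
    have : R γ u = R γ (u - A w) + R γ (A w) := by
      rw [← map_add, sub_add_cancel]
    rw [this, hRw]
    rw [smul_add, smul_sub]
  have hb1 : ‖γ • R γ (u - A w)‖ ≤ M * ‖u - A w‖ := smul_R_bound M R hnorm hγ _
  have hb2 : ‖γ • (γ • R γ w)‖ ≤ γ * (M * ‖w‖) := by
    rw [norm_smul, Real.norm_eq_abs, abs_of_pos hγ]
    exact mul_le_mul_of_nonneg_left (smul_R_bound M R hnorm hγ w) hγ.le
  have hdu : ‖u - A w‖ < ε / (2 * M) := by
    rwa [dist_eq_norm] at hdist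
  have hγw : γ * ((1 + M) * ‖w‖) ≤ ε / 2 := by
    rw [hγdef]
    rw [div_mul_eq_mul_div, div_le_div_iff₀ (by positivity) (by norm_num)]
    nlinarith
  calc ‖γ • R γ u‖ ≤ ‖γ • R γ (u - A w)‖ + (‖γ • w‖ + ‖γ • (γ • R γ w)‖) := by
        rw [hdecomp]
        exact le_trans (norm_add_le _ _) (by gcongr; exact norm_sub_le _ _)
    _ ≤ M * ‖u - A w‖ + (γ * ‖w‖ + γ * (M * ‖w‖)) := by
        gcongr
        rw [norm_smul, Real.norm_eq_abs, abs_of_pos hγ]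
    _ ≤ ε / 2 + ε / 2 := by
        have h1 : M * ‖u - A w‖ ≤ ε / 2 := by
          have := mul_le_mul_of_nonneg_left hdu.le hM0.le
          calc M * ‖u - A w‖ ≤ M * (ε / (2 * M)) := this
            _ = ε / 2 := by field_simp
        have h2 : γ * ‖w‖ + γ * (M * ‖w‖) = γ * ((1 + M) * ‖w‖) := by ring
        linarith [hγw, h2 ▸ le_refl (γ * ‖w‖ + γ * (M * ‖w‖)), hγw]
    _ = ε := by ring

/-- for a nonnegative bounded linear operator `A` on a Banach space `X`
with resolvent family `R γ = (A + γ I)⁻¹` and `u` in the closure of `R(A)`, the maximal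
best possible error `P_δ(u) = sup_{‖Δ‖≤δ} inf_{γ>0} ‖-γ(A+γI)⁻¹u + (A+γI)⁻¹Δ‖`
tends to `0` as `δ → 0⁺`. -/
theorem lavrentiev_P_tendsto_zero
    {X : Type*} [NormedAddCommGroup X] [NormedSpace ℝ X] [CompleteSpace X]
    (A : X →L[ℝ] X) (M : ℝ) (hM : 1 ≤ M) (R : ℝ → X →L[ℝ] X)
    (hinv : ∀ γ : ℝ, 0 < γ →
      (A + γ • (1 : X →L[ℝ] X)).comp (R γ) = 1 ∧
      (R γ).comp (A + γ • (1 : X →L[ℝ] X)) = 1)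
    (hnorm : ∀ γ : ℝ, 0 < γ → ‖R γ‖ ≤ M / γ)
    (u : X) (hu : u ∈ closure (Set.range A)) :
    Tendsto (fun δ : ℝ => ⨆ Δ : {Δ : X // ‖Δ‖ ≤ δ}, ⨅ γ : {γ : ℝ // 0 < γ},
        ‖-(γ.1 • R γ.1 u) + R γ.1 Δ.1‖) (𝓝[>] (0 : ℝ)) (𝓝 0) := by
  have hM0 : 0 < M := lt_of_lt_of_le one_pos hM
  rw [tendsto_order]
  constructor
  · intro a ha
    filter_upwards with δ
    refine lt_of_lt_of_le ha ?_
    apply Real.iSup_nonneg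
    intro Δ
    exact Real.iInf_nonneg fun γ => norm_nonneg _
  · intro a ha
    obtain ⟨γ₀, hγ₀, hkey⟩ := key_small A M hM R hinv hnorm u hu (a / 4) (by linarith)
    have hbound : (0:ℝ) < a * γ₀ / (4 * M) := by positivity
    filter_upwards [Ioo_mem_nhdsGT_of_mem (Set.mem_Ico.2 ⟨le_refl (0:ℝ), hbound⟩)]
      with δ hδ
    obtain ⟨hδ0, hδ1⟩ := hδ
    have hsup : (⨆ Δ : {Δ : X // ‖Δ‖ ≤ δ}, ⨅ γ : {γ : ℝ // 0 < γ},
        ‖-(γ.1 • R γ.1 u) + R γ.1 Δ.1‖) ≤ a / 2 := by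
      refine Real.iSup_le (fun Δ => ?_) (by linarith)
      have hbdd : BddBelow (Set.range fun γ : {γ : ℝ // 0 < γ} =>
          ‖-(γ.1 • R γ.1 u) + R γ.1 Δ.1‖) := by
        refine ⟨0, ?_⟩
        rintro x ⟨γ, rfl⟩
        exact norm_nonneg _
      refine le_trans (ciInf_le hbdd ⟨γ₀, hγ₀⟩) ?_
      have hRΔ : ‖R γ₀ Δ.1‖ ≤ (M / γ₀) * δ := by
        calc ‖R γ₀ Δ.1‖ ≤ ‖R γ₀‖ * ‖Δ.1‖ := (R γ₀).le_opNorm _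
          _ ≤ (M / γ₀) * δ :=
              mul_le_mul (hnorm γ₀ hγ₀) Δ.2 (norm_nonneg _) (by positivity)
      have hRΔ2 : (M / γ₀) * δ < a / 4 := by
        rw [div_mul_eq_mul_div, div_lt_div_iff₀ hγ₀ (by norm_num : (0:ℝ) < 4)]
        calc M * δ * 4 < M * (a * γ₀ / (4 * M)) * 4 := by
              have := mul_lt_mul_of_pos_left hδ1 hM0
              nlinarith
          _ = a * γ₀ := by field_simp
      calc ‖-(γ₀ • R γ₀ u) + R γ₀ Δ.1‖ ≤ ‖γ₀ • R γ₀ u‖ + ‖R γ₀ Δ.1‖ := by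
            refine le_trans (norm_add_le _ _) ?_
            rw [norm_neg]
        _ ≤ a / 4 + (M / γ₀) * δ := add_le_add hkey hRΔ
        _ ≤ a / 2 := by linarith
    exact lt_of_le_of_lt hsup (by linarith)
end

section
/- Let A be a nonnegative bounded linear operator on a Banach space X, and let u ∈ X belong to the range of A. Define P_δ(u) = sup over Δ ∈ X with ‖Δ‖ ≤ δ of the inf over γ > 0 of ‖-γ(A + γI)⁻¹u + (A + γI)⁻¹Δ‖. Then P_δ(u) = O(δ^{1/2}) as δ → 0 from the right. -/
open Filter Asymptotics
open scoped Topology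

/-- for a nonnegative bounded linear operator `A` on a Banach space `X`
with resolvent family `R γ = (A + γ I)⁻¹` and `u ∈ R(A)`, the maximal best possible
error `P_δ(u) = sup_{‖Δ‖≤δ} inf_{γ>0} ‖-γ(A+γI)⁻¹u + (A+γI)⁻¹Δ‖` satisfies
`P_δ(u) = O(δ^{1/2})` as `δ → 0⁺`. -/
theorem lavrentiev_P_rate_sqrt
    {X : Type*} [NormedAddCommGroup X] [NormedSpace ℝ X] [CompleteSpace X]
    (A : X →L[ℝ] X) (M : ℝ) (hM : 1 ≤ M) (R : ℝ → X →L[ℝ] X)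
    (hinv : ∀ γ : ℝ, 0 < γ →
      (A + γ • (1 : X →L[ℝ] X)).comp (R γ) = 1 ∧
      (R γ).comp (A + γ • (1 : X →L[ℝ] X)) = 1)
    (hnorm : ∀ γ : ℝ, 0 < γ → ‖R γ‖ ≤ M / γ)
    (u : X) (hu : u ∈ Set.range A) :
    (fun δ : ℝ => ⨆ Δ : {Δ : X // ‖Δ‖ ≤ δ}, ⨅ γ : {γ : ℝ // 0 < γ},
        ‖-(γ.1 • R γ.1 u) + R γ.1 Δ.1‖)
      =O[𝓝[>] (0 : ℝ)] (fun δ : ℝ => δ ^ ((1 : ℝ) / 2)) := by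
  obtain ⟨w, hw⟩ := hu
  have hM0 : (0:ℝ) < M := lt_of_lt_of_le one_pos hM
  -- key bound on the residual for each γ > 0 and each Δ
  have key : ∀ (Δ : X) (γ : ℝ), 0 < γ → ‖Δ‖ ≤ γ * γ →
      ‖-(γ • R γ u) + R γ Δ‖ ≤ γ * ((1 + M) * ‖w‖ + M) := by
    intro Δ γ hγ hΔ
    have hinv2 := (hinv γ hγ).2
    have hRA : R γ (A w) = w - γ • R γ w := by
      have := congrArg (fun T : X →L[ℝ] X => T w) hinv2
      simp only [ContinuousLinearMap.comp_apply, ContinuousLinearMap.add_apply,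
        ContinuousLinearMap.smul_apply, ContinuousLinearMap.one_apply, map_add,
        map_smul] at this
      have h' : R γ (A w) + γ • R γ w = w := this
      linear_combination (norm := abel) h'
    have hRn : ∀ x : X, ‖R γ x‖ ≤ M / γ * ‖x‖ := fun x =>
      (R γ).le_of_opNorm_le (hnorm γ hγ) x
    have h1 : ‖γ • R γ u‖ ≤ γ * ((1 + M) * ‖w‖) := by
      rw [← hw, hRA, norm_smul, Real.norm_of_nonneg hγ.le]
      have h2 : ‖w - γ • R γ w‖ ≤ ‖w‖ + γ * (M / γ * ‖w‖) := by
        calc ‖w - γ • R γ w‖ ≤ ‖w‖ + ‖γ • R γ w‖ := norm_sub_le _ _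
          _ ≤ ‖w‖ + γ * (M / γ * ‖w‖) := by
              rw [norm_smul, Real.norm_of_nonneg hγ.le]
              gcongr
              exact hRn w
      have : γ * (M / γ * ‖w‖) = M * ‖w‖ := by field_simp
      rw [this] at h2
      calc γ * ‖w - γ • R γ w‖ ≤ γ * (‖w‖ + M * ‖w‖) := by gcongr
        _ = γ * ((1 + M) * ‖w‖) := by ring
    have h2 : ‖R γ Δ‖ ≤ γ * M := by
      calc ‖R γ Δ‖ ≤ M / γ * ‖Δ‖ := hRn Δ
        _ ≤ M / γ * (γ * γ) := by gcongr
        _ = γ * M := by field_simp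
    calc ‖-(γ • R γ u) + R γ Δ‖ ≤ ‖γ • R γ u‖ + ‖R γ Δ‖ := by
          rw [← norm_neg (γ • R γ u)] ; exact norm_add_le _ _
      _ ≤ γ * ((1 + M) * ‖w‖) + γ * M := add_le_add h1 h2
      _ = γ * ((1 + M) * ‖w‖ + M) := by ring
  rw [isBigO_iff]
  refine ⟨(1 + M) * ‖w‖ + M, ?_⟩
  filter_upwards [self_mem_nhdsWithin] with δ (hδ : 0 < δ)
  set s := Real.sqrt δ with hs
  have hsd : 0 < s := Real.sqrt_pos.2 hδ
  have hrw : ‖δ ^ ((1:ℝ)/2)‖ = s := by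
    rw [← Real.sqrt_eq_rpow, Real.norm_of_nonneg (Real.sqrt_nonneg _)]
  have hC0 : (0:ℝ) ≤ (1 + M) * ‖w‖ + M := by positivity
  -- each inner infimum is at most the bound at γ = sqrt δ
  have hinf : ∀ Δ : {Δ : X // ‖Δ‖ ≤ δ},
      (⨅ γ : {γ : ℝ // 0 < γ}, ‖-(γ.1 • R γ.1 u) + R γ.1 Δ.1‖)
        ≤ ((1 + M) * ‖w‖ + M) * s := by
    intro Δ
    have hbdd : BddBelow (Set.range fun γ : {γ : ℝ // 0 < γ} =>
        ‖-(γ.1 • R γ.1 u) + R γ.1 Δ.1‖) :=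
      ⟨0, by rintro x ⟨γ, rfl⟩; exact norm_nonneg _⟩
    refine le_trans (ciInf_le hbdd ⟨s, hsd⟩) ?_
    have hΔ : ‖Δ.1‖ ≤ s * s := by
      rw [hs, Real.mul_self_sqrt hδ.le]; exact Δ.2
    calc ‖-(s • R s u) + R s Δ.1‖ ≤ s * ((1 + M) * ‖w‖ + M) := key Δ.1 s hsd hΔ
      _ = ((1 + M) * ‖w‖ + M) * s := by ring
  have hsup : (⨆ Δ : {Δ : X // ‖Δ‖ ≤ δ}, ⨅ γ : {γ : ℝ // 0 < γ},
      ‖-(γ.1 • R γ.1 u) + R γ.1 Δ.1‖) ≤ ((1 + M) * ‖w‖ + M) * s := by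
    haveI : Nonempty {Δ : X // ‖Δ‖ ≤ δ} := ⟨⟨0, by simpa using hδ.le⟩⟩
    exact ciSup_le hinf
  have hnn : (0:ℝ) ≤ ⨆ Δ : {Δ : X // ‖Δ‖ ≤ δ}, ⨅ γ : {γ : ℝ // 0 < γ},
      ‖-(γ.1 • R γ.1 u) + R γ.1 Δ.1‖ := by
    haveI : Nonempty {Δ : X // ‖Δ‖ ≤ δ} := ⟨⟨0, by simpa using hδ.le⟩⟩
    refine le_ciSup_of_le ?_ ⟨0, by simpa using hδ.le⟩ ?_
    · refine ⟨((1 + M) * ‖w‖ + M) * s, ?_⟩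
      rintro x ⟨Δ, rfl⟩; exact hinf Δ
    · exact Real.iInf_nonneg fun γ => norm_nonneg _
  rw [Real.norm_of_nonneg hnn, hrw]
  exact hsup
end

section
/- Let A be a nonnegative bounded linear operator on a reflexive Banach space X, and let u ∈ X. Define P_δ(u) = sup over Δ ∈ X with ‖Δ‖ ≤ δ of the inf over γ > 0 of ‖-γ(A + γI)⁻¹u + (A + γI)⁻¹Δ‖. If P_δ(u) → 0 as δ → 0 from the right, then u belongs to the closure of the range of A. -/
open Filter Asymptotics
open scoped Topology

/-- converse result. For a nonnegative bounded linear operator `A` on a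
reflexive Banach space `X` with resolvent family `R γ = (A + γ I)⁻¹`, if the maximal
best possible error `P_δ(u) = sup_{‖Δ‖≤δ} inf_{γ>0} ‖-γ(A+γI)⁻¹u + (A+γI)⁻¹Δ‖`
tends to `0` as `δ → 0⁺`, then `u` lies in the closure of `R(A)`. -/
theorem lavrentiev_P_converse_closure
    {X : Type*} [NormedAddCommGroup X] [NormedSpace ℝ X] [CompleteSpace X]
    (hrefl : Function.Surjective (NormedSpace.inclusionInDoubleDual ℝ X))
    (A : X →L[ℝ] X) (M : ℝ) (hM : 1 ≤ M) (R : ℝ → X →L[ℝ] X)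
    (hinv : ∀ γ : ℝ, 0 < γ →
      (A + γ • (1 : X →L[ℝ] X)).comp (R γ) = 1 ∧
      (R γ).comp (A + γ • (1 : X →L[ℝ] X)) = 1)
    (hnorm : ∀ γ : ℝ, 0 < γ → ‖R γ‖ ≤ M / γ)
    (u : X)
    (hP : Tendsto (fun δ : ℝ => ⨆ Δ : {Δ : X // ‖Δ‖ ≤ δ}, ⨅ γ : {γ : ℝ // 0 < γ},
        ‖-(γ.1 • R γ.1 u) + R γ.1 Δ.1‖) (𝓝[>] (0 : ℝ)) (𝓝 0)) :
    u ∈ closure (Set.range A) := by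
  -- the key quantity: infimum over γ of ‖γ R_γ u‖
  set c : ℝ := ⨅ γ : {γ : ℝ // 0 < γ}, ‖-(γ.1 • R γ.1 u) + R γ.1 (0 : X)‖ with hc
  have hbdd : BddBelow (Set.range fun γ : {γ : ℝ // 0 < γ} =>
      ‖-(γ.1 • R γ.1 u) + R γ.1 (0 : X)‖) :=
    ⟨0, by rintro x ⟨γ, rfl⟩; exact norm_nonneg _⟩
  -- c ≤ P_δ for all δ > 0
  have hle : ∀ δ : ℝ, 0 < δ → c ≤ ⨆ Δ : {Δ : X // ‖Δ‖ ≤ δ}, ⨅ γ : {γ : ℝ // 0 < γ},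
      ‖-(γ.1 • R γ.1 u) + R γ.1 Δ.1‖ := by
    intro δ hδ
    have hbdda : BddAbove (Set.range fun Δ : {Δ : X // ‖Δ‖ ≤ δ} =>
        ⨅ γ : {γ : ℝ // 0 < γ}, ‖-(γ.1 • R γ.1 u) + R γ.1 Δ.1‖) := by
      refine ⟨‖R 1 u‖ + ‖R 1‖ * δ, ?_⟩
      rintro x ⟨Δ, rfl⟩
      refine le_trans (ciInf_le ⟨0, by rintro x ⟨γ, rfl⟩; exact norm_nonneg _⟩
        ⟨1, one_pos⟩) ?_
      calc ‖-((1:ℝ) • R 1 u) + R 1 Δ.1‖ ≤ ‖-((1:ℝ) • R 1 u)‖ + ‖R 1 Δ.1‖ :=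
            norm_add_le _ _
        _ ≤ ‖R 1 u‖ + ‖R 1‖ * δ := by
            rw [norm_neg, one_smul]
            gcongr
            exact le_trans ((R 1).le_opNorm _) (by gcongr; exact Δ.2)
    have h0 : c ≤ (fun Δ : {Δ : X // ‖Δ‖ ≤ δ} =>
        ⨅ γ : {γ : ℝ // 0 < γ}, ‖-(γ.1 • R γ.1 u) + R γ.1 Δ.1‖)
        ⟨0, by simp [le_of_lt hδ]⟩ := le_of_eq rfl
    exact h0.trans (le_ciSup hbdda _)
  -- hence c ≤ 0 along δ → 0⁺, so c = 0
  have hcle : c ≤ 0 :=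
    ge_of_tendsto hP (eventually_nhdsWithin_of_forall fun δ hδ => hle δ hδ)
  have hcge : 0 ≤ c := le_ciInf fun γ => norm_nonneg _
  have hc0 : c = 0 := le_antisymm hcle hcge
  -- conclude membership in closure
  rw [Metric.mem_closure_iff]
  intro ε hε
  have : c < ε := by rw [hc0]; exact hε
  obtain ⟨⟨γ, hγ⟩, hlt⟩ := exists_lt_of_ciInf_lt this
  refine ⟨A (R γ u), ⟨R γ u, rfl⟩, ?_⟩
  have h1 := hinv γ hγ
  have hid : A (R γ u) + γ • R γ u = u := by
    have := congrArg (fun T : X →L[ℝ] X => T u) h1.1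
    simpa using this
  rw [dist_eq_norm, ← eq_sub_of_add_eq' hid]
  simpa using hlt
end

section
/- Converse result for noisy data: let A be an accretive bounded linear operator on a Hilbert space H, let u ∈ H, and let 0 < p ≤ 1. Define P_δ(u) = sup over Δ ∈ H with ‖Δ‖ ≤ δ of the inf over γ > 0 of ‖-γ(A + γI)⁻¹u + (A + γI)⁻¹Δ‖. If P_δ(u) = O(δ^{p/(p+1)}) as δ → 0 from the right, then ‖γ(A + γI)⁻¹u‖ = O(γ^p) as γ → 0 from the right. -/
open Filter Asymptotics
open scoped Topology

set_option maxHeartbeats 1000000 in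
/-- converse result for noisy data. Let `A` be accretive on a Hilbert
space `H` with resolvent family `R γ = (A + γ I)⁻¹`, `u ∈ H` and `0 < p ≤ 1`. If the
maximal best possible error
`P_δ(u) = sup_{‖Δ‖≤δ} inf_{γ>0} ‖-γ(A+γI)⁻¹u + (A+γI)⁻¹Δ‖` satisfies
`P_δ(u) = O(δ^{p/(p+1)})` as `δ → 0⁺`, then `‖γ(A+γI)⁻¹u‖ = O(γ^p)` as `γ → 0⁺`. -/
theorem lavrentiev_converse_noisy_data
    {𝕜 : Type*} [RCLike 𝕜] {H : Type*} [NormedAddCommGroup H]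
    [InnerProductSpace 𝕜 H] [CompleteSpace H]
    (A : H →L[𝕜] H)
    (hacc : ∀ v : H, 0 ≤ RCLike.re (inner 𝕜 (A v) v : 𝕜))
    (R : ℝ → H →L[𝕜] H)
    (hinv : ∀ γ : ℝ, 0 < γ →
      (A + (γ : 𝕜) • (1 : H →L[𝕜] H)).comp (R γ) = 1 ∧
      (R γ).comp (A + (γ : 𝕜) • (1 : H →L[𝕜] H)) = 1)
    (u : H) (p : ℝ) (hp0 : 0 < p) (hp1 : p ≤ 1)
    (hP : (fun δ : ℝ => ⨆ Δ : {Δ : H // ‖Δ‖ ≤ δ}, ⨅ γ : {γ : ℝ // 0 < γ},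
        ‖-((γ.1 : 𝕜) • R γ.1 u) + R γ.1 Δ.1‖)
      =O[𝓝[>] (0 : ℝ)] (fun δ : ℝ => δ ^ (p / (p + 1)))) :
    (fun γ : ℝ => (γ : 𝕜) • R γ u) =O[𝓝[>] (0 : ℝ)] (fun γ : ℝ => γ ^ p) := by
  classical
  by_cases hu : u = 0
  · simp only [hu, map_zero, smul_zero]
    exact isBigO_zero _ _
  have hunorm : (0:ℝ) < ‖u‖ := norm_pos_iff.mpr hu
  -- pointwise versions of the inverse property
  have hinv1 : ∀ γ : ℝ, 0 < γ → ∀ x : H, A (R γ x) + (γ : 𝕜) • R γ x = x := by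
    intro γ hγ x
    have h := congrArg (fun T : H →L[𝕜] H => T x) (hinv γ hγ).1
    simpa using h
  have hinv2 : ∀ γ : ℝ, 0 < γ → ∀ x : H, R γ (A x + (γ : 𝕜) • x) = x := by
    intro γ hγ x
    have h := congrArg (fun T : H →L[𝕜] H => T x) (hinv γ hγ).2
    simpa using h
  have hF1 : ∀ γ : ℝ, 0 < γ → ∀ x : H, A (R γ x) = x - (γ : 𝕜) • R γ x := by
    intro γ hγ x
    have := hinv1 γ hγ x
    exact eq_sub_of_add_eq this
  have hF2 : ∀ γ : ℝ, 0 < γ → ∀ x : H, R γ (A x) = x - (γ : 𝕜) • R γ x := by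
    intro γ hγ x
    have h : R γ (A x) + (γ : 𝕜) • R γ x = x := by
      have := hinv2 γ hγ x
      rwa [map_add, map_smul] at this
    exact eq_sub_of_add_eq h
  -- re of inner products with real scalars
  have hre_smul_r : ∀ (r : ℝ) (x y : H),
      RCLike.re (inner 𝕜 x ((r:𝕜) • y) : 𝕜) = r * RCLike.re (inner 𝕜 x y : 𝕜) := by
    intro r x y
    rw [inner_smul_right, RCLike.re_ofReal_mul]
  have hre_smul_l : ∀ (r : ℝ) (x y : H),
      RCLike.re (inner 𝕜 ((r:𝕜) • x) y : 𝕜) = r * RCLike.re (inner 𝕜 x y : 𝕜) := by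
    intro r x y
    rw [inner_smul_left, RCLike.conj_ofReal, RCLike.re_ofReal_mul]
  have hre_symm : ∀ x y : H, RCLike.re (inner 𝕜 x y : 𝕜) = RCLike.re (inner 𝕜 y x : 𝕜) := by
    intro x y
    rw [← inner_conj_symm, RCLike.conj_re]
  have hre_le : ∀ x y : H, RCLike.re (inner 𝕜 x y : 𝕜) ≤ ‖x‖ * ‖y‖ := by
    intro x y
    exact le_trans (RCLike.re_le_norm _) (norm_inner_le_norm x y)
  -- accretivity in second slot
  have hacc' : ∀ v : H, 0 ≤ RCLike.re (inner 𝕜 v (A v) : 𝕜) := by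
    intro v
    rw [hre_symm]
    exact hacc v
  -- E3 : re ⟪R γ x, x⟫ ≥ 0
  have hE3 : ∀ γ : ℝ, 0 < γ → ∀ x : H, 0 ≤ RCLike.re (inner 𝕜 (R γ x) x : 𝕜) := by
    intro γ hγ x
    set y := R γ x with hy
    have hx : x = A y + (γ : 𝕜) • y := (hinv1 γ hγ x).symm
    have hexp : RCLike.re (inner 𝕜 y x : 𝕜)
        = RCLike.re (inner 𝕜 y (A y) : 𝕜) + γ * ‖y‖^2 := by
      conv_lhs => rw [hx]
      rw [inner_add_right, map_add, hre_smul_r, inner_self_eq_norm_sq]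
    have h1 := hacc' y
    have h2 : (0:ℝ) ≤ γ * ‖y‖^2 := by positivity
    rw [hexp]
    linarith
  -- E2 : γ * ‖R γ x‖ ≤ ‖x‖
  have hE2 : ∀ γ : ℝ, 0 < γ → ∀ x : H, γ * ‖R γ x‖ ≤ ‖x‖ := by
    intro γ hγ x
    set y := R γ x with hy
    have hx : x = A y + (γ : 𝕜) • y := (hinv1 γ hγ x).symm
    have hexp : RCLike.re (inner 𝕜 y x : 𝕜)
        = RCLike.re (inner 𝕜 y (A y) : 𝕜) + γ * ‖y‖^2 := by
      conv_lhs => rw [hx]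
      rw [inner_add_right, map_add, hre_smul_r, inner_self_eq_norm_sq]
    have key : γ * ‖y‖^2 ≤ ‖y‖ * ‖x‖ := by
      have h1 := hacc' y
      have h2 := hre_le y x
      nlinarith
    rcases eq_or_lt_of_le (norm_nonneg y) with h0 | h0
    · rw [← h0]; simpa using norm_nonneg x
    · nlinarith
  -- F3 : resolvent identity
  have hF3 : ∀ β b : ℝ, 0 < β → 0 < b → ∀ x : H,
      R β x = R b x + ((b - β : ℝ) : 𝕜) • R β (R b x) := by
    intro β b hβ hb x
    have h1 : R β (A (R b x) + (β : 𝕜) • R b x) = R b x := hinv2 β hβ (R b x)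
    rw [hF1 b hb x] at h1
    have h2 : x - (b : 𝕜) • R b x + (β : 𝕜) • R b x
        = x + ((β - b : ℝ) : 𝕜) • R b x := by
      rw [show ((β - b : ℝ) : 𝕜) = (β : 𝕜) - (b : 𝕜) by push_cast; ring, sub_smul]
      abel
    rw [h2, map_add, map_smul] at h1
    have h3 : R β x = R b x - ((β - b : ℝ) : 𝕜) • R β (R b x) :=
      eq_sub_of_add_eq h1
    rw [h3, sub_eq_add_neg, ← neg_smul]
    congr 2
    push_cast
    ring
  -- E4 : β ↦ ‖R β x‖ is nonincreasing
  have hE4 : ∀ β b : ℝ, 0 < β → β ≤ b → ∀ x : H, ‖R b x‖ ≤ ‖R β x‖ := by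
    intro β b hβ hβb x
    have hb : 0 < b := lt_of_lt_of_le hβ hβb
    have hid := hF3 β b hβ hb x
    set a := R b x with ha
    rcases eq_or_lt_of_le (norm_nonneg a) with h0 | h0
    · rw [← h0]; exact norm_nonneg _
    · have hre : ‖a‖^2 ≤ RCLike.re (inner 𝕜 (R β x) a : 𝕜) := by
        conv_rhs => rw [hid]
        rw [inner_add_left, map_add, hre_smul_l, inner_self_eq_norm_sq]
        have h1 : 0 ≤ RCLike.re (inner 𝕜 (R β a) a : 𝕜) := hE3 β hβ a
        nlinarith [sub_nonneg.mpr hβb]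
      have h2 : RCLike.re (inner 𝕜 (R β x) a : 𝕜) ≤ ‖R β x‖ * ‖a‖ := hre_le _ _
      nlinarith
  -- E5 : β ↦ β * ‖R β x‖ is nondecreasing
  have hE5 : ∀ β b : ℝ, 0 < β → β ≤ b → ∀ x : H, β * ‖R β x‖ ≤ b * ‖R b x‖ := by
    intro β b hβ hβb x
    have hb : 0 < b := lt_of_lt_of_le hβ hβb
    have hid := hF3 β b hβ hb x
    have h1 : ‖R β x‖ ≤ ‖R b x‖ + (b - β) * ‖R β (R b x)‖ := by
      calc ‖R β x‖ = ‖R b x + ((b - β : ℝ) : 𝕜) • R β (R b x)‖ := by rw [← hid]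
        _ ≤ ‖R b x‖ + ‖((b - β : ℝ) : 𝕜) • R β (R b x)‖ := norm_add_le _ _
        _ = ‖R b x‖ + (b - β) * ‖R β (R b x)‖ := by
            rw [norm_smul, RCLike.norm_ofReal, abs_of_nonneg (sub_nonneg.mpr hβb)]
    have h2 : β * ‖R β (R b x)‖ ≤ ‖R b x‖ := hE2 β hβ (R b x)
    nlinarith [norm_nonneg (R β (R b x)), sub_nonneg.mpr hβb]
  -- E6 : cross positivity
  have hE6 : ∀ β b : ℝ, 0 < β → 0 < b → ∀ x : H,
      0 ≤ RCLike.re (inner 𝕜 (R β (R b x)) (R β x) : 𝕜) := by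
    intro β b hβ hb x
    set w := R β (R b x) with hw
    have hkey : R β x = A w + (b : 𝕜) • w := by
      have h1 : A w = R b x - (β : 𝕜) • w := hF1 β hβ (R b x)
      rw [h1, hF3 β b hβ hb x]
      rw [show ((b - β : ℝ) : 𝕜) = (b : 𝕜) - (β : 𝕜) by push_cast; ring, sub_smul]
      abel
    have hexp : RCLike.re (inner 𝕜 w (R β x) : 𝕜)
        = RCLike.re (inner 𝕜 w (A w) : 𝕜) + b * ‖w‖^2 := by
      conv_lhs => rw [hkey]
      rw [inner_add_right, map_add, hre_smul_r, inner_self_eq_norm_sq]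
    rw [hexp]
    have := hacc' w
    nlinarith [norm_nonneg w]
  -- E9 : quantitative lower bound for ‖R β z‖
  have hE9 : ∀ β : ℝ, 0 < β → ∀ z : H, β * ‖z‖ - ‖A z‖ ≤ β^2 * ‖R β z‖ := by
    intro β hβ z
    have hid : (β : 𝕜) • R β z = z - R β (A z) := by
      have := hF2 β hβ z
      rw [this]; abel
    have h1 : ‖z‖ - ‖R β (A z)‖ ≤ β * ‖R β z‖ := by
      have : β * ‖R β z‖ = ‖(β : 𝕜) • R β z‖ := by
        rw [norm_smul, RCLike.norm_ofReal, abs_of_pos hβ]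
      rw [this, hid]
      have := norm_sub_norm_le z (R β (A z))
      have h2 := norm_sub_le z (R β (A z))
      linarith [norm_sub_norm_le z (R β (A z))]
    have h2 : β * ‖R β (A z)‖ ≤ ‖A z‖ := hE2 β hβ (A z)
    nlinarith [norm_nonneg (R β (A z)), norm_nonneg (R β z)]
  -- extract a uniform bound from the big-O hypothesis
  obtain ⟨K₀, hK₀⟩ := hP.bound
  set q : ℝ := p / (p + 1) with hqdef
  have hp1' : (0:ℝ) < p + 1 := by linarith
  have hq0 : 0 < q := div_pos hp0 hp1'
  set K := max K₀ 1 with hKdef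
  have hK1 : (1:ℝ) ≤ K := le_max_right _ _
  have hKpos : (0:ℝ) < K := lt_of_lt_of_le one_pos hK1
  have hK : ∀ᶠ δ in 𝓝[>] (0:ℝ),
      ‖⨆ Δ : {Δ : H // ‖Δ‖ ≤ δ}, ⨅ γ : {γ : ℝ // 0 < γ},
        ‖-((γ.1 : 𝕜) • R γ.1 u) + R γ.1 Δ.1‖‖ ≤ K * ‖δ ^ q‖ := by
    filter_upwards [hK₀] with δ h
    exact le_trans h (mul_le_mul_of_nonneg_right (le_max_left _ _) (norm_nonneg _))
  obtain ⟨ε, hε, hKε⟩ : ∃ ε, 0 < ε ∧ ∀ δ : ℝ, 0 < δ → δ < ε →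
      ‖⨆ Δ : {Δ : H // ‖Δ‖ ≤ δ}, ⨅ γ : {γ : ℝ // 0 < γ},
        ‖-((γ.1 : 𝕜) • R γ.1 u) + R γ.1 Δ.1‖‖ ≤ K * ‖δ ^ q‖ := by
    have h := hK
    rw [Filter.eventually_iff, mem_nhdsGT_iff_exists_Ioo_subset] at h
    obtain ⟨ε, hε, hsub⟩ := h
    exact ⟨ε, hε, fun δ h1 h2 => hsub ⟨h1, h2⟩⟩
  haveI : Nonempty {γ : ℝ // 0 < γ} := ⟨⟨1, one_pos⟩⟩
  by_cases hbdd : ∃ B : ℝ, ∀ β : ℝ, 0 < β → ‖R β u‖ ≤ B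
  · -- bounded resolvent: linear rate
    obtain ⟨B, hB⟩ := hbdd
    have hB0 : 0 ≤ B := le_trans (norm_nonneg _) (hB 1 one_pos)
    rw [isBigO_iff]
    refine ⟨B, ?_⟩
    filter_upwards [Ioo_mem_nhdsGT (show (0:ℝ) < 1 by norm_num)] with γ hγ
    obtain ⟨hγ0, hγ1⟩ := hγ
    have h1 : ‖(γ:𝕜) • R γ u‖ = γ * ‖R γ u‖ := by
      rw [norm_smul, RCLike.norm_ofReal, abs_of_pos hγ0]
    have h2 : ‖γ ^ p‖ = γ ^ p := by
      rw [Real.norm_eq_abs, abs_of_pos (Real.rpow_pos_of_pos hγ0 p)]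
    rw [h1, h2]
    have h3 : γ ≤ γ ^ p := by
      calc γ = γ ^ (1:ℝ) := (Real.rpow_one γ).symm
        _ ≤ γ ^ p := Real.rpow_le_rpow_of_exponent_ge hγ0 (le_of_lt hγ1) hp1
    calc γ * ‖R γ u‖ ≤ γ * B := mul_le_mul_of_nonneg_left (hB γ hγ0) (le_of_lt hγ0)
      _ ≤ γ ^ p * B := mul_le_mul_of_nonneg_right h3 hB0
      _ = B * γ ^ p := mul_comm _ _
  · -- unbounded resolvent: the main case
    push_neg at hbdd
    rw [isBigO_iff]
    refine ⟨K ^ (p+1) * 2 ^ p, ?_⟩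
    have hc4 : (0:ℝ) < min (ε / (2 * ‖u‖ + 1)) 1 := by positivity
    filter_upwards [Ioo_mem_nhdsGT hc4] with c hc
    obtain ⟨hc0, hcl⟩ := hc
    have hcε : c < ε / (2 * ‖u‖ + 1) := lt_of_lt_of_le hcl (min_le_left _ _)
    have hRcu : R c u ≠ 0 := by
      intro h0
      apply hu
      have h := hinv1 c hc0 u
      rw [h0] at h
      simpa using h.symm
    set gc := c * ‖R c u‖ with hgcdef
    have hgc0 : 0 < gc := mul_pos hc0 (norm_pos_iff.mpr hRcu)
    have hgcu : gc ≤ ‖u‖ := hE2 c hc0 u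
    obtain ⟨b, hb0, hbig⟩ := hbdd (8 * ‖u‖ / c)
    set mb := ‖R b u‖ with hmbdef
    have hmb8 : 8 * ‖u‖ / c < mb := hbig
    have hmb0 : 0 < mb := lt_of_le_of_lt (by positivity) hmb8
    set σ := 2 * c * gc / mb with hσdef
    have hσ0 : 0 < σ := by positivity
    set Δ : H := (-(σ:𝕜)) • R b u with hΔdef
    set δ := 2 * c * gc with hδdef
    have hΔnorm : ‖Δ‖ = δ := by
      rw [hΔdef, norm_smul, norm_neg, RCLike.norm_ofReal, abs_of_pos hσ0, hσdef, hδdef]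
      field_simp
      rfl
    have hδ0 : 0 < δ := by rw [hδdef]; positivity
    have hδε : δ < ε := by
      have h1 : c * (2 * ‖u‖ + 1) < ε := (lt_div_iff₀ (by positivity)).mp hcε
      rw [show c * (2 * ‖u‖ + 1) = 2 * c * ‖u‖ + c by ring] at h1
      have h2 : δ ≤ 2 * c * ‖u‖ := by
        rw [hδdef]
        exact mul_le_mul_of_nonneg_left hgcu (by positivity)
      linarith
    have hAz : ‖A (R b u)‖ ≤ 2 * ‖u‖ := by
      rw [hF1 b hb0 u]
      calc ‖u - (b:𝕜) • R b u‖ ≤ ‖u‖ + ‖(b:𝕜) • R b u‖ := norm_sub_le _ _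
        _ = ‖u‖ + b * ‖R b u‖ := by rw [norm_smul, RCLike.norm_ofReal, abs_of_pos hb0]
        _ ≤ ‖u‖ + ‖u‖ := by linarith [hE2 b hb0 u]
        _ = 2 * ‖u‖ := by ring
    -- the key uniform lower bound
    have key : ∀ β : {γ : ℝ // 0 < γ}, gc ≤ ‖-((β.1:𝕜) • R β.1 u) + R β.1 Δ‖ := by
      rintro ⟨β, hβ⟩
      show gc ≤ ‖-((β:𝕜) • R β u) + R β Δ‖
      have hrw : ‖-((β:𝕜) • R β u) + R β Δ‖
          = ‖(β:𝕜) • R β u + (σ:𝕜) • R β (R b u)‖ := by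
        rw [hΔdef, map_smul, neg_smul, ← neg_add, norm_neg]
      rw [hrw]
      set e := (β:𝕜) • R β u + (σ:𝕜) • R β (R b u) with he
      rcases le_or_gt c β with hcβ | hβc
      · -- large β
        have hy : R β u ≠ 0 := by
          intro h0
          apply hu
          have h := hinv1 β hβ u
          rw [h0] at h
          simpa using h.symm
        have hy0 : 0 < ‖R β u‖ := norm_pos_iff.mpr hy
        have h7 : β * ‖R β u‖ ≤ ‖e‖ := by
          have hre : β * ‖R β u‖^2 ≤ RCLike.re (inner 𝕜 e (R β u) : 𝕜) := by
            rw [he, inner_add_left, map_add, hre_smul_l, hre_smul_l, inner_self_eq_norm_sq]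
            have h6 := hE6 β b hβ hb0 u
            nlinarith
          have hcs : RCLike.re (inner 𝕜 e (R β u) : 𝕜) ≤ ‖e‖ * ‖R β u‖ := hre_le _ _
          nlinarith
        calc gc ≤ β * ‖R β u‖ := hE5 c β hc0 hcβ u
          _ ≤ ‖e‖ := h7
      · -- small β
        have h8 : σ * ‖R β (R b u)‖ ≤ ‖e‖ := by
          set w := R β (R b u) with hwdef
          have hre : σ * ‖w‖^2 ≤ RCLike.re (inner 𝕜 e w : 𝕜) := by
            rw [he, inner_add_left, map_add, hre_smul_l, hre_smul_l, inner_self_eq_norm_sq]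
            have h6 : 0 ≤ RCLike.re (inner 𝕜 w (R β u) : 𝕜) := hE6 β b hβ hb0 u
            have h6' : 0 ≤ RCLike.re (inner 𝕜 (R β u) w : 𝕜) := by
              rw [hre_symm]; exact h6
            nlinarith
          have hcs := hre_le e w
          rcases eq_or_lt_of_le (norm_nonneg w) with h0 | h0
          · rw [← h0, mul_zero]; exact norm_nonneg _
          · nlinarith
        have hz : mb / (2 * c) ≤ ‖R β (R b u)‖ := by
          set β' := max β (4 * ‖u‖ / mb) with hβ'def
          have hβ'0 : 0 < β' := lt_of_lt_of_le hβ (le_max_left _ _)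
          have h4u : 4 * ‖u‖ / mb ≤ c := by
            rw [div_le_iff₀ hmb0]
            have h1 := (div_lt_iff₀ hc0).mp hmb8
            nlinarith
          have hβ'c : β' ≤ c := max_le (le_of_lt hβc) h4u
          have hmono' : ‖R β' (R b u)‖ ≤ ‖R β (R b u)‖ :=
            hE4 β β' hβ (le_max_left _ _) (R b u)
          have h9 : β' * mb - ‖A (R b u)‖ ≤ β'^2 * ‖R β' (R b u)‖ := hE9 β' hβ'0 (R b u)
          have h4β' : 4 * ‖u‖ ≤ mb * β' := by
            have h1 : 4 * ‖u‖ / mb ≤ β' := le_max_right _ _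
            rw [div_le_iff₀ hmb0] at h1
            nlinarith
          have hs1 : β' * mb / 2 ≤ β'^2 * ‖R β' (R b u)‖ := by nlinarith
          have hs2 : mb ≤ 2 * β' * ‖R β' (R b u)‖ := by nlinarith
          rw [div_le_iff₀ (by positivity)]
          nlinarith [norm_nonneg (R β' (R b u))]
        calc gc = σ * (mb / (2 * c)) := by
              rw [hσdef, hδdef]
              field_simp
          _ ≤ σ * ‖R β (R b u)‖ := mul_le_mul_of_nonneg_left hz (le_of_lt hσ0)
          _ ≤ ‖e‖ := h8
    -- assemble: gc ≤ P(δ) ≤ K δ^q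
    have hinf : gc ≤ ⨅ γ : {γ : ℝ // 0 < γ}, ‖-((γ.1:𝕜) • R γ.1 u) + R γ.1 Δ‖ :=
      le_ciInf key
    have hbddA : BddAbove (Set.range (fun Δ' : {Δ' : H // ‖Δ'‖ ≤ δ} =>
        ⨅ γ : {γ : ℝ // 0 < γ}, ‖-((γ.1:𝕜) • R γ.1 u) + R γ.1 Δ'.1‖)) := by
      refine ⟨‖R 1 u‖ + ‖R 1‖ * δ, ?_⟩
      rintro x ⟨Δ', rfl⟩
      have hbb : BddBelow (Set.range (fun γ : {γ : ℝ // 0 < γ} =>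
          ‖-((γ.1:𝕜) • R γ.1 u) + R γ.1 Δ'.1‖)) := by
        refine ⟨0, ?_⟩
        rintro y ⟨γ', rfl⟩
        exact norm_nonneg _
      refine ciInf_le_of_le hbb ⟨1, one_pos⟩ ?_
      calc ‖-(((1:ℝ):𝕜) • R 1 u) + R 1 Δ'.1‖
          ≤ ‖-(((1:ℝ):𝕜) • R 1 u)‖ + ‖R 1 Δ'.1‖ := norm_add_le _ _
        _ ≤ ‖R 1 u‖ + ‖R 1‖ * δ := by
            rw [norm_neg, norm_smul, RCLike.norm_ofReal]
            have h1 := (R 1).le_opNorm Δ'.1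
            have h2 : ‖R 1‖ * ‖Δ'.1‖ ≤ ‖R 1‖ * δ :=
              mul_le_mul_of_nonneg_left Δ'.2 (norm_nonneg _)
            simp only [abs_one, one_mul]
            linarith
    have hsup : (⨅ γ : {γ : ℝ // 0 < γ}, ‖-((γ.1:𝕜) • R γ.1 u) + R γ.1 Δ‖)
        ≤ ⨆ Δ' : {Δ' : H // ‖Δ'‖ ≤ δ}, ⨅ γ : {γ : ℝ // 0 < γ},
            ‖-((γ.1:𝕜) • R γ.1 u) + R γ.1 Δ'.1‖ :=
      le_ciSup hbddA ⟨Δ, le_of_eq hΔnorm⟩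
    have hfinal : gc ≤ K * δ ^ q := by
      have h1 := hKε δ hδ0 hδε
      have h2 : ‖δ ^ q‖ = δ ^ q := by
        rw [Real.norm_eq_abs, abs_of_pos (Real.rpow_pos_of_pos hδ0 q)]
      have h3 : gc ≤ ⨆ Δ' : {Δ' : H // ‖Δ'‖ ≤ δ}, ⨅ γ : {γ : ℝ // 0 < γ},
          ‖-((γ.1:𝕜) • R γ.1 u) + R γ.1 Δ'.1‖ := le_trans hinf hsup
      calc gc ≤ ‖⨆ Δ' : {Δ' : H // ‖Δ'‖ ≤ δ}, ⨅ γ : {γ : ℝ // 0 < γ},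
            ‖-((γ.1:𝕜) • R γ.1 u) + R γ.1 Δ'.1‖‖ := le_trans h3 (le_abs_self _)
        _ ≤ K * ‖δ ^ q‖ := h1
        _ = K * δ ^ q := by rw [h2]
    -- rpow algebra
    have hq1p : q * (p + 1) = p := by
      rw [hqdef]; field_simp
    have h1q : (1 - q) * (p + 1) = 1 := by
      rw [hqdef]; field_simp
      ring
    have hexp : δ ^ q = 2 ^ q * c ^ q * gc ^ q := by
      rw [hδdef, Real.mul_rpow (by positivity) (le_of_lt hgc0),
        Real.mul_rpow (by norm_num) (le_of_lt hc0)]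
    have h5 : gc ^ (1 - q) ≤ K * 2 ^ q * c ^ q := by
      have hgq : 0 < gc ^ q := Real.rpow_pos_of_pos hgc0 q
      rw [Real.rpow_sub hgc0, Real.rpow_one, div_le_iff₀ hgq]
      calc gc ≤ K * δ ^ q := hfinal
        _ = K * 2 ^ q * c ^ q * gc ^ q := by rw [hexp]; ring
    have h6 : gc ≤ (K * 2 ^ q * c ^ q) ^ (p + 1) := by
      have h61 : gc = (gc ^ (1 - q)) ^ (p + 1) := by
        rw [← Real.rpow_mul (le_of_lt hgc0), h1q, Real.rpow_one]
      rw [h61]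
      exact Real.rpow_le_rpow (Real.rpow_nonneg (le_of_lt hgc0) _) h5 (by positivity)
    have h7 : (K * 2 ^ q * c ^ q) ^ (p + 1) = K ^ (p+1) * 2 ^ p * c ^ p := by
      rw [Real.mul_rpow (by positivity) (Real.rpow_nonneg (le_of_lt hc0) q),
        Real.mul_rpow (le_of_lt hKpos) (by positivity),
        ← Real.rpow_mul (by norm_num : (0:ℝ) ≤ 2),
        ← Real.rpow_mul (le_of_lt hc0), hq1p]
    have hnorm1 : ‖(c:𝕜) • R c u‖ = gc := by
      rw [norm_smul, RCLike.norm_ofReal, abs_of_pos hc0, hgcdef]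
    have hnorm2 : ‖c ^ p‖ = c ^ p := by
      rw [Real.norm_eq_abs, abs_of_pos (Real.rpow_pos_of_pos hc0 p)]
    rw [hnorm1, hnorm2]
    calc gc ≤ (K * 2 ^ q * c ^ q) ^ (p + 1) := h6
      _ = K ^ (p+1) * 2 ^ p * c ^ p := h7
      _ = K ^ (p+1) * 2 ^ p * c ^ p := by ring
end

section
/- Saturation for noisy data: let A be an accretive bounded linear operator on a Hilbert space H with R(A) ≠ H, and let u ∈ H. Define P_δ(u) = sup over Δ ∈ H with ‖Δ‖ ≤ δ of the inf over γ > 0 of ‖-γ(A + γI)⁻¹u + (A + γI)⁻¹Δ‖. If P_δ(u) = o(δ^{1/2}) as δ → 0 from the right, then u = 0. -/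
open Filter Asymptotics
open scoped Topology

set_option maxHeartbeats 12000000


/-- Region (a): large `γ` is impossible. -/
private lemma lavrentiev_arith_a (nA nu δ s c' γ F : ℝ)
    (hnu : 0 < nu) (hnA : 0 ≤ nA) (hδ0 : 0 < δ) (hss : s*s = δ)
    (hs0 : 0 < s) (hs1 : s ≤ 1) (hsu : s ≤ nu/2) (hδu2 : δ ≤ nu/2)
    (hc' : 0 < c') (hc'c2 : c' ≤ nu/(nA+1)/4)
    (hγs : s ≤ γ) (hF : 0 ≤ F) (hlow : γ*nu - δ ≤ (nA+γ)*F) (hup : F < c'*s) :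
    False := by
  have hA1 : (0:ℝ) < nA + 1 := by linarith
  have hkc : (nA+1) * c' ≤ nu/4 := by
    have h := mul_le_mul_of_nonneg_left hc'c2 hA1.le
    have : (nA+1) * (nu/(nA+1)/4) = nu/4 := by field_simp
    linarith
  rcases le_or_gt γ 1 with hγ1 | hγ1
  · have h1 : (nA+γ)*F ≤ (nA+1)*(c'*s) := by nlinarith
    have h2 : s*nu - δ ≤ γ*nu - δ := by nlinarith
    have h3 : δ ≤ s*(nu/2) := by nlinarith
    nlinarith
  · have hγpos : (0:ℝ) < nA + γ := by linarith
    have e1 : (nA+γ)*F ≤ (nA+γ)*(c'*s) := mul_le_mul_of_nonneg_left hup.le hγpos.le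
    have e2 : nA + γ ≤ γ*(nA+1) := by nlinarith [mul_le_mul_of_nonneg_right hγ1.le hnA]
    have e3 : (nA+γ)*(c'*s) ≤ (γ*(nA+1))*(c'*s) :=
      mul_le_mul_of_nonneg_right e2 (mul_pos hc' hs0).le
    have h1 : γ*nu - δ ≥ γ*(nu/2) := by nlinarith [mul_pos (sub_pos.mpr hγ1) hnu]
    have e4 : γ*(nu/2) ≤ γ*((nA+1)*(c'*s)) := by nlinarith
    have e5 : nu/2 ≤ (nA+1)*(c'*s) := le_of_mul_le_mul_left e4 (by linarith)
    have e6 : c'*s ≤ c' := by nlinarith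
    have e7 : (nA+1)*(c'*s) ≤ (nA+1)*c' := mul_le_mul_of_nonneg_left e6 hA1.le
    linarith

/-- Region (b): `γ ≤ t` is impossible. -/
private lemma lavrentiev_arith_b (δ s r t c' Y M : ℝ)
    (hδ0 : 0 < δ) (hs0 : 0 < s) (ht0 : 0 < t) (hr0 : 0 < r)
    (hc' : 0 < c') (hc'r : c' ≤ r)
    (hw : 15/16 ≤ t*Y) (hM : t*M = δ/16) (hδr : 4*(r*(t*s)) ≤ δ)
    (h1 : δ*Y - M < c'*s) : False := by
  have h2 : (δ*Y - M)*t < c'*s*t := mul_lt_mul_of_pos_right h1 ht0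
  have h3 : δ*(15/16) ≤ δ*(t*Y) := mul_le_mul_of_nonneg_left hw hδ0.le
  have h4 : δ*(t*Y) - t*M < c'*s*t := by nlinarith
  have h5 : 7/8*δ < c'*s*t := by nlinarith
  have h6 : c'*s*t ≤ r*s*t := by nlinarith [mul_pos hs0 ht0]
  nlinarith [mul_pos (mul_pos hr0 ht0) hs0]

/-- Region (c): in the middle band the noise term dominates unless
`δ < 4 γ² ‖R γ u‖`. -/
private lemma lavrentiev_arith_c (δ s c' γ Y M : ℝ)
    (hδ0 : 0 < δ) (hs0 : 0 < s) (hss : s*s = δ) (hγ : 0 < γ) (hγs : γ < s)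
    (hc' : 0 < c') (hc'8 : c' ≤ 1/8)
    (hw : 15/16 ≤ γ*Y) (hM4 : 4*(γ*M) ≤ δ) (hM0 : 0 ≤ M)
    (h1 : δ*Y - M < c'*s) : False := by
  have h2 : (δ*Y - M)*γ < c'*s*γ := mul_lt_mul_of_pos_right h1 hγ
  have h3 : δ*(15/16) ≤ δ*(γ*Y) := mul_le_mul_of_nonneg_left hw hδ0.le
  have h4 : 11/16*δ < c'*s*γ := by nlinarith
  have h5 : c'*s*γ < c'*(s*s) := by nlinarith
  nlinarith

/-- Propagation to a smaller parameter. -/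
private lemma lavrentiev_arith_prop (δ s c' τ γ X Z W : ℝ)
    (hτ0 : 0 < τ) (hγ : 0 < γ) (hγs : γ < s) (hτγ : τ ≤ γ) (hss : s*s = δ)
    (hc' : 0 < c') (hs0 : 0 < s)
    (hX0 : 0 ≤ X) (hZ0 : 0 ≤ Z) (hW0 : 0 ≤ W)
    (h1 : τ*X ≤ τ*Z + τ*((γ - τ)*W)) (h3 : τ*W ≤ Z) (hz : Z < c'*s) :
    τ*X < c'*δ := by
  have h4 : τ*((γ-τ)*W) ≤ (γ-τ)*Z := by nlinarith
  have h5 : τ*X ≤ γ*Z := by nlinarith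
  have h6 : γ*Z < γ*(c'*s) := by nlinarith
  have h7 : γ*(c'*s) < s*(c'*s) := by nlinarith [mul_pos hc' hs0]
  nlinarith

/-- Final contradiction. -/
private lemma lavrentiev_arith_final (δ c' τ γp γm Q : ℝ)
    (hδ0 : 0 < δ) (hτ0 : 0 < τ) (hQ : 0 ≤ Q)
    (hτp : τ ≤ γp) (hτm : τ ≤ γm)
    (hband : δ < 4*(τ*(τ*Q)))
    (h3 : τ*((γp+γm)*Q) < 2*(c'*δ))
    (hc'8 : c' ≤ 1/8) : False := by
  have h1 : 2*(τ*(τ*Q)) ≤ τ*((γp+γm)*Q) := by nlinarith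
  nlinarith


/-- saturation for noisy data. Let `A` be accretive on a Hilbert space
`H` with `R(A) ≠ H` and resolvent family `R γ = (A + γ I)⁻¹`, and `u ∈ H`. If the
maximal best possible error
`P_δ(u) = sup_{‖Δ‖≤δ} inf_{γ>0} ‖-γ(A+γI)⁻¹u + (A+γI)⁻¹Δ‖` satisfies
`P_δ(u) = o(δ^{1/2})` as `δ → 0⁺`, then `u = 0`. -/
theorem lavrentiev_saturation_noisy_data
    {𝕜 : Type*} [RCLike 𝕜] {H : Type*} [NormedAddCommGroup H]
    [InnerProductSpace 𝕜 H] [CompleteSpace H]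
    (A : H →L[𝕜] H)
    (hacc : ∀ v : H, 0 ≤ RCLike.re (inner 𝕜 (A v) v : 𝕜))
    (hrange : Set.range A ≠ Set.univ)
    (R : ℝ → H →L[𝕜] H)
    (hinv : ∀ γ : ℝ, 0 < γ →
      (A + (γ : 𝕜) • (1 : H →L[𝕜] H)).comp (R γ) = 1 ∧
      (R γ).comp (A + (γ : 𝕜) • (1 : H →L[𝕜] H)) = 1)
    (u : H)
    (hP : (fun δ : ℝ => ⨆ Δ : {Δ : H // ‖Δ‖ ≤ δ}, ⨅ γ : {γ : ℝ // 0 < γ},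
        ‖-((γ.1 : 𝕜) • R γ.1 u) + R γ.1 Δ.1‖)
      =o[𝓝[>] (0 : ℝ)] (fun δ : ℝ => δ ^ ((1 : ℝ) / 2))) :
    u = 0 := by
  classical
  by_contra hu
  have hu0 : 0 < ‖u‖ := norm_pos_iff.mpr hu
  have hA1 : (0:ℝ) < ‖A‖ + 1 := by positivity
  -- ### Basic operator facts
  have happ : ∀ γ : ℝ, 0 < γ → ∀ x : H, A (R γ x) + (γ : 𝕜) • (R γ x) = x := by
    intro γ hγ x
    have h := congrArg (fun T : H →L[𝕜] H => T x) (hinv γ hγ).1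
    simpa using h
  have happ' : ∀ γ : ℝ, 0 < γ → ∀ x : H, R γ (A x + (γ : 𝕜) • x) = x := by
    intro γ hγ x
    have h := congrArg (fun T : H →L[𝕜] H => T x) (hinv γ hγ).2
    simpa using h
  -- H1 : γ‖R γ x‖ ≤ ‖x‖
  have H1 : ∀ γ : ℝ, 0 < γ → ∀ x : H, γ * ‖R γ x‖ ≤ ‖x‖ := by
    intro γ hγ x
    set w := R γ x with hw
    have hxw : A w + (γ:𝕜) • w = x := happ γ hγ x
    have h1 : γ * ‖w‖^2 ≤ RCLike.re (inner 𝕜 x w : 𝕜) := by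
      rw [← hxw, inner_add_left, map_add, inner_smul_left, RCLike.conj_ofReal]
      have h2 : RCLike.re ((γ:𝕜) * (inner 𝕜 w w : 𝕜)) = γ * ‖w‖^2 := by
        rw [RCLike.re_ofReal_mul, inner_self_eq_norm_sq]
      rw [h2]
      have := hacc w
      linarith
    have h3 : RCLike.re (inner 𝕜 x w : 𝕜) ≤ ‖x‖ * ‖w‖ :=
      le_trans (RCLike.re_le_norm _) (norm_inner_le_norm x w)
    have hwn : 0 ≤ ‖w‖ := norm_nonneg w
    rcases eq_or_lt_of_le hwn with h | h
    · rw [← h]; simpa using norm_nonneg x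
    · have : γ * ‖w‖ * ‖w‖ ≤ ‖x‖ * ‖w‖ := by nlinarith
      exact le_of_mul_le_mul_right (by linarith) h
  -- H2 : ‖x‖ ≤ (‖A‖+γ)‖R γ x‖
  have H2 : ∀ γ : ℝ, 0 < γ → ∀ x : H, ‖x‖ ≤ (‖A‖ + γ) * ‖R γ x‖ := by
    intro γ hγ x
    set w := R γ x with hw
    have hxw : A w + (γ:𝕜) • w = x := happ γ hγ x
    calc ‖x‖ = ‖A w + (γ:𝕜) • w‖ := by rw [hxw]
      _ ≤ ‖A w‖ + ‖(γ:𝕜) • w‖ := norm_add_le _ _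
      _ ≤ ‖A‖ * ‖w‖ + γ * ‖w‖ := by
          gcongr
          · exact A.le_opNorm w
          · rw [norm_smul, RCLike.norm_ofReal, abs_of_pos hγ]
      _ = (‖A‖ + γ) * ‖w‖ := by ring
  -- H3 : 0 ≤ re ⟪R γ x, x⟫
  have H3 : ∀ γ : ℝ, 0 < γ → ∀ x : H, 0 ≤ RCLike.re (inner 𝕜 (R γ x) x : 𝕜) := by
    intro γ hγ x
    set w := R γ x with hw
    have hxw : A w + (γ:𝕜) • w = x := happ γ hγ x
    rw [← hxw, inner_add_right, map_add, inner_smul_right]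
    have h2 : RCLike.re ((γ:𝕜) * (inner 𝕜 w w : 𝕜)) = γ * ‖w‖^2 := by
      rw [RCLike.re_ofReal_mul, inner_self_eq_norm_sq]
    rw [h2]
    have h4 : RCLike.re (inner 𝕜 w (A w) : 𝕜) = RCLike.re (inner 𝕜 (A w) w : 𝕜) := by
      rw [← inner_conj_symm]
      exact RCLike.conj_re _
    rw [h4]
    have := hacc w
    nlinarith [sq_nonneg ‖w‖]
  -- Hres : resolvent identity
  have Hres : ∀ τ γ : ℝ, 0 < τ → 0 < γ → ∀ x : H,
      R τ x = R γ x + ((γ - τ : ℝ) : 𝕜) • R τ (R γ x) := by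
    intro τ γ hτ hγ x
    set w := R γ x with hw
    have hxw : A w + (γ:𝕜) • w = x := happ γ hγ x
    have hsplit : x = (A w + (τ:𝕜) • w) + ((γ - τ : ℝ):𝕜) • w := by
      rw [← hxw, RCLike.ofReal_sub, sub_smul]
      abel
    calc R τ x = R τ ((A w + (τ:𝕜) • w) + ((γ - τ : ℝ):𝕜) • w) := by rw [← hsplit]
      _ = R τ (A w + (τ:𝕜) • w) + ((γ - τ : ℝ):𝕜) • R τ w := by
          rw [map_add, map_smul]
      _ = w + ((γ - τ : ℝ):𝕜) • R τ w := by rw [happ' τ hτ w]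
  -- H4 : monotonicity of γ ↦ γ‖R γ x‖
  have H4 : ∀ τ γ : ℝ, 0 < τ → τ ≤ γ → ∀ x : H, τ * ‖R τ x‖ ≤ γ * ‖R γ x‖ := by
    intro τ γ hτ hτγ x
    have hγ : 0 < γ := lt_of_lt_of_le hτ hτγ
    have h := Hres τ γ hτ hγ x
    have h1 : ‖R τ x‖ ≤ ‖R γ x‖ + (γ - τ) * ‖R τ (R γ x)‖ := by
      rw [h]
      refine le_trans (norm_add_le _ _) ?_
      gcongr
      rw [norm_smul, RCLike.norm_ofReal, abs_of_nonneg (by linarith)]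
    have h2 : τ * ‖R τ (R γ x)‖ ≤ ‖R γ x‖ := H1 τ hτ (R γ x)
    nlinarith [norm_nonneg (R τ (R γ x)), norm_nonneg (R γ x)]
  -- H5 : persistence below scale t
  have H5 : ∀ t γ : ℝ, 0 < γ → γ ≤ t → ∀ y : H, ‖R t y‖ ≤ ‖R γ y‖ := by
    intro t γ hγ hγt y
    have ht : 0 < t := lt_of_lt_of_le hγ hγt
    set v := R t y with hv
    have h := Hres γ t hγ ht y
    rw [← hv] at h
    have hsq : ‖v‖^2 ≤ ‖R γ y‖^2 := by
      rw [h, norm_add_sq (𝕜 := 𝕜)]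
      have hc : 0 ≤ RCLike.re (inner 𝕜 v (((t - γ : ℝ):𝕜) • R γ v) : 𝕜) := by
        rw [inner_smul_right, RCLike.re_ofReal_mul]
        have h4 : RCLike.re (inner 𝕜 v (R γ v) : 𝕜) = RCLike.re (inner 𝕜 (R γ v) v : 𝕜) := by
          rw [← inner_conj_symm]; exact RCLike.conj_re _
        rw [h4]
        exact mul_nonneg (by linarith) (H3 γ hγ v)
      nlinarith [sq_nonneg ‖((t - γ : ℝ):𝕜) • R γ v‖]
    nlinarith [norm_nonneg v, norm_nonneg (R γ y)]
  -- Hy : existence of near-maximizers (uses non-surjectivity of A)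
  have Hy : ∀ t : ℝ, 0 < t → ∃ y : H, ‖y‖ ≤ 1 ∧ 15/16 ≤ t * ‖R t y‖ := by
    intro t ht
    by_contra hcon
    push_neg at hcon
    have hb : ∀ x : H, ‖R t x‖ ≤ (15/16/t) * ‖x‖ := by
      intro x
      rcases eq_or_ne x 0 with rfl | hx
      · simp
      · have hxn : 0 < ‖x‖ := norm_pos_iff.mpr hx
        have h1 := hcon ((((‖x‖)⁻¹ : ℝ) : 𝕜) • x) (by
          rw [norm_smul, RCLike.norm_ofReal, abs_of_pos (by positivity)]
          rw [inv_mul_cancel₀ (ne_of_gt hxn)])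
        rw [map_smul, norm_smul, RCLike.norm_ofReal, abs_of_pos (by positivity)] at h1
        have h2 : t * (‖x‖⁻¹ * ‖R t x‖) < 15/16 := h1
        rw [div_mul_eq_mul_div, div_mul_eq_mul_div]
        rw [le_div_iff₀ ht]
        have h3 := mul_lt_mul_of_pos_right h2 hxn
        have h4 : t * (‖x‖⁻¹ * ‖R t x‖) * ‖x‖ = t * ‖R t x‖ := by field_simp
        rw [h4] at h3
        nlinarith [norm_nonneg (R t x)]
    have hop : ‖(t:𝕜) • R t‖ < 1 := by
      have := ContinuousLinearMap.opNorm_le_bound (R t) (by positivity) hb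
      have h2 : ‖(t:𝕜) • R t‖ = t * ‖R t‖ := by
        rw [@norm_smul 𝕜 (H →L[𝕜] H) _ _ _ _ (t:𝕜) (R t), RCLike.norm_ofReal, abs_of_pos ht]
      rw [h2]
      have h3 : t * ‖R t‖ ≤ t * (15/16/t) :=
        mul_le_mul_of_nonneg_left this (le_of_lt ht)
      have h4 : t * (15/16/t) = 15/16 := by field_simp
      linarith
    let U1 : (H →L[𝕜] H)ˣ := Units.oneSub ((t:𝕜) • R t) hop
    let U2 : (H →L[𝕜] H)ˣ :=
      ⟨A + (t:𝕜) • 1, R t,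
        by rw [ContinuousLinearMap.mul_def]; exact (hinv t ht).1,
        by rw [ContinuousLinearMap.mul_def]; exact (hinv t ht).2⟩
    have hA : ((U2 * U1 : (H →L[𝕜] H)ˣ) : H →L[𝕜] H) = A := by
      rw [Units.val_mul]
      show (A + (t:𝕜) • 1) * (1 - (t:𝕜) • R t) = A
      have h1 : (A + (t:𝕜) • 1) * ((t:𝕜) • R t) = (t:𝕜) • ((A + (t:𝕜) • 1) * R t) :=
        mul_smul_comm _ _ _
      have h2 : (A + (t:𝕜) • 1) * R t = 1 := by
        rw [ContinuousLinearMap.mul_def]; exact (hinv t ht).1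
      rw [mul_sub, mul_one, h1, h2]
      abel
    apply hrange
    rw [Set.range_eq_univ]
    intro b
    refine ⟨(((U2 * U1 : (H →L[𝕜] H)ˣ)⁻¹ : (H →L[𝕜] H)ˣ) : H →L[𝕜] H) b, ?_⟩
    have := congrArg (fun T : H →L[𝕜] H => T b) (U2 * U1).mul_inv
    rw [← hA]
    simpa [ContinuousLinearMap.mul_def] using this
  -- ### constants
  set c2 : ℝ := ‖u‖ / (‖A‖ + 1) with hc2def
  have hc2 : 0 < c2 := by positivity
  set r : ℝ := Real.sqrt c2 with hrdef
  have hr : 0 < r := Real.sqrt_pos.mpr hc2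
  have hrr : r * r = c2 := Real.mul_self_sqrt hc2.le
  set c' : ℝ := min (1/8) (min (c2/4) r) with hc'def
  have hc' : 0 < c' := lt_min (by norm_num) (lt_min (by positivity) hr)
  have hc'8 : c' ≤ 1/8 := min_le_left _ _
  have hc'c2 : c' ≤ c2/4 := le_trans (min_le_right _ _) (min_le_left _ _)
  have hc'r : c' ≤ r := le_trans (min_le_right _ _) (min_le_right _ _)
  -- ### pick δ small
  set D : ℝ := min 1 (min (‖u‖/2) (min (‖u‖^2/4) c2)) with hDdef
  have hD0 : 0 < D := by
    refine lt_min one_pos (lt_min (by positivity) (lt_min (by positivity) hc2))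
  have hev := (hP.def (show (0:ℝ) < c'/2 by linarith only [hc'])).and
    (eventually_of_mem (Ioo_mem_nhdsGT_of_mem (⟨le_refl 0, hD0⟩ : (0:ℝ) ∈ Set.Ico 0 D))
      (fun x hx => hx))
  obtain ⟨δ, hPδ, hδ0, hδD⟩ := hev.exists
  have hδ1 : δ ≤ 1 := le_of_lt (lt_of_lt_of_le hδD (min_le_left _ _))
  have hδu2 : δ ≤ ‖u‖/2 :=
    le_of_lt (lt_of_lt_of_le hδD (le_trans (min_le_right _ _) (min_le_left _ _)))
  have hδu4 : δ ≤ ‖u‖^2/4 :=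
    le_of_lt (lt_of_lt_of_le hδD (le_trans (min_le_right _ _)
      (le_trans (min_le_right _ _) (min_le_left _ _))))
  have hδc2 : δ ≤ c2 :=
    le_of_lt (lt_of_lt_of_le hδD (le_trans (min_le_right _ _)
      (le_trans (min_le_right _ _) (min_le_right _ _))))
  set s : ℝ := Real.sqrt δ with hsdef
  have hs0 : 0 < s := Real.sqrt_pos.mpr hδ0
  have hss : s * s = δ := Real.mul_self_sqrt hδ0.le
  have hs1 : s ≤ 1 := Real.sqrt_le_one.mpr hδ1
  have hsu : s ≤ ‖u‖/2 := by
    have h1 : Real.sqrt δ ≤ Real.sqrt (‖u‖^2/4) := Real.sqrt_le_sqrt hδu4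
    have h2 : Real.sqrt (‖u‖^2/4) = ‖u‖/2 := by
      rw [show ‖u‖^2/4 = (‖u‖/2)^2 by ring, Real.sqrt_sq (by positivity)]
    rw [← hsdef] at h1
    linarith only [h2 ▸ h1]
  -- the sup is ≤ (c'/2) s
  have hPle : (⨆ Δ : {Δ : H // ‖Δ‖ ≤ δ}, ⨅ γ : {γ : ℝ // 0 < γ},
      ‖-((γ.1 : 𝕜) • R γ.1 u) + R γ.1 Δ.1‖) ≤ c'/2 * s := by
    have h1 : ‖(⨆ Δ : {Δ : H // ‖Δ‖ ≤ δ}, ⨅ γ : {γ : ℝ // 0 < γ},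
        ‖-((γ.1 : 𝕜) • R γ.1 u) + R γ.1 Δ.1‖)‖ ≤ c'/2 * ‖δ ^ ((1:ℝ)/2)‖ := hPδ
    have h2 : δ ^ ((1:ℝ)/2) = s := by rw [hsdef, Real.sqrt_eq_rpow]
    rw [h2] at h1
    calc (⨆ Δ : {Δ : H // ‖Δ‖ ≤ δ}, ⨅ γ : {γ : ℝ // 0 < γ},
        ‖-((γ.1 : 𝕜) • R γ.1 u) + R γ.1 Δ.1‖)
        ≤ ‖(⨆ Δ : {Δ : H // ‖Δ‖ ≤ δ}, ⨅ γ : {γ : ℝ // 0 < γ},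
          ‖-((γ.1 : 𝕜) • R γ.1 u) + R γ.1 Δ.1‖)‖ := le_abs_self _
      _ ≤ c'/2 * ‖s‖ := h1
      _ = c'/2 * s := by rw [Real.norm_eq_abs, abs_of_pos hs0]
  -- ### IVT : choose scale t with t²‖R t u‖ = δ/16
  set φ : ℝ → ℝ := fun γ => γ^2 * ‖R γ u‖ with hφdef
  set a : ℝ := min 1 (δ/(16*(‖u‖+1))) with hadef
  have ha0 : 0 < a := lt_min one_pos (by positivity)
  have ha1 : a ≤ 1 := min_le_left _ _
  have hφa : φ a ≤ δ/16 := by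
    have h1 : a * ‖R a u‖ ≤ ‖u‖ := H1 a ha0 u
    have h2 : φ a = a * (a * ‖R a u‖) := by rw [hφdef]; ring
    have h3 : a ≤ δ/(16*(‖u‖+1)) := min_le_right _ _
    have h4 : a * (a * ‖R a u‖) ≤ a * ‖u‖ :=
      mul_le_mul_of_nonneg_left h1 ha0.le
    have h5 : a * ‖u‖ ≤ (δ/(16*(‖u‖+1))) * ‖u‖ :=
      mul_le_mul_of_nonneg_right h3 (norm_nonneg u)
    have h6 : (δ/(16*(‖u‖+1))) * ‖u‖ ≤ δ/16 := by
      rw [div_mul_eq_mul_div, div_le_div_iff₀ (by positivity) (by norm_num)]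
      nlinarith only [hδ0.le, norm_nonneg u]
    linarith only [h2 ▸ (le_trans h4 (le_trans h5 h6))]
  have hφ1 : δ/16 ≤ φ 1 := by
    have h1 : ‖u‖ ≤ (‖A‖ + 1) * ‖R 1 u‖ := H2 1 one_pos u
    have h2 : c2 ≤ ‖R 1 u‖ := by
      rw [hc2def, div_le_iff₀ hA1]
      linarith only [mul_comm ((‖A‖+1)) (‖R 1 u‖) ▸ h1]
    have h3 : φ 1 = ‖R 1 u‖ := by rw [hφdef]; ring
    rw [h3]
    linarith only [h2, hδc2, hδ0]
  have hRlip : ContinuousOn (fun γ : ℝ => R γ u) (Set.Icc a 1) := by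
    have hlip : LipschitzOnWith (Real.toNNReal (‖u‖/(a*a)))
        (fun γ : ℝ => R γ u) (Set.Icc a 1) := by
      apply LipschitzOnWith.of_dist_le_mul
      intro x hx y hy
      rw [dist_eq_norm, Real.dist_eq]
      have hx0 : 0 < x := lt_of_lt_of_le ha0 hx.1
      have hy0 : 0 < y := lt_of_lt_of_le ha0 hy.1
      have h := Hres x y hx0 hy0 u
      have h2 : ‖R x u - R y u‖ = |y - x| * ‖R x (R y u)‖ := by
        rw [h]
        rw [show R y u + ((y - x : ℝ):𝕜) • R x (R y u) - R y u
          = ((y - x : ℝ):𝕜) • R x (R y u) by abel]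
        rw [norm_smul, RCLike.norm_ofReal]
      rw [h2]
      have h3 : x * ‖R x (R y u)‖ ≤ ‖R y u‖ := H1 x hx0 (R y u)
      have h4 : y * ‖R y u‖ ≤ ‖u‖ := H1 y hy0 u
      have h5 : ‖R x (R y u)‖ ≤ ‖u‖/(a*a) := by
        rw [le_div_iff₀ (by positivity)]
        have hax : a ≤ x := hx.1
        have hay : a ≤ y := hy.1
        have e1 : a * ‖R x (R y u)‖ ≤ x * ‖R x (R y u)‖ := by
          nlinarith only [hx.1, norm_nonneg (R x (R y u))]
        have e2 : a * ‖R x (R y u)‖ ≤ ‖R y u‖ := le_trans e1 h3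
        have e3 : a * (a * ‖R x (R y u)‖) ≤ a * ‖R y u‖ :=
          mul_le_mul_of_nonneg_left e2 ha0.le
        have e4 : a * ‖R y u‖ ≤ y * ‖R y u‖ := by nlinarith only [hy.1, norm_nonneg (R y u)]
        have e5 : ‖R x (R y u)‖ * (a*a) = a * (a * ‖R x (R y u)‖) := by ring
        rw [e5]
        linarith only [e3, e4, h4]
      have h6 : (Real.toNNReal (‖u‖/(a*a)) : ℝ) = ‖u‖/(a*a) :=
        Real.coe_toNNReal _ (by positivity)
      rw [h6, abs_sub_comm x y]
      calc |y - x| * ‖R x (R y u)‖ ≤ |y - x| * (‖u‖/(a*a)) :=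
            mul_le_mul_of_nonneg_left h5 (abs_nonneg _)
        _ = ‖u‖/(a*a) * |y - x| := by ring
    exact hlip.continuousOn
  have hφcont : ContinuousOn φ (Set.Icc a 1) := by
    have : ContinuousOn (fun γ : ℝ => ‖R γ u‖) (Set.Icc a 1) := hRlip.norm
    exact ((continuous_pow 2).continuousOn).mul this
  obtain ⟨t, htmem, hφt⟩ :=
    intermediate_value_Icc ha1 hφcont ⟨hφa, hφ1⟩
  have ht0 : 0 < t := lt_of_lt_of_le ha0 htmem.1
  have ht1 : t ≤ 1 := htmem.2
  have hφteq : t * (t * ‖R t u‖) = δ/16 := by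
    have h : φ t = δ/16 := hφt
    rw [hφdef] at h
    linear_combination h
  -- t is small : 4 r t ≤ s, and δ ≥ 4 r t s
  have htc2 : t * (t * c2) ≤ δ/16 := by
    have h1 : ‖u‖ ≤ (‖A‖ + t) * ‖R t u‖ := H2 t ht0 u
    have h2 : c2 ≤ ‖R t u‖ := by
      rw [hc2def, div_le_iff₀ hA1]
      have e1 : (‖A‖ + t) * ‖R t u‖ ≤ (‖A‖ + 1) * ‖R t u‖ :=
        mul_le_mul_of_nonneg_right (by linarith only [ht1]) (norm_nonneg _)
      linarith only [h1, e1]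
    have e2 : t * c2 ≤ t * ‖R t u‖ := mul_le_mul_of_nonneg_left h2 ht0.le
    have e3 : t * (t * c2) ≤ t * (t * ‖R t u‖) :=
      mul_le_mul_of_nonneg_left e2 ht0.le
    linarith only [e3, hφteq]
  have hrts : 4 * (r * t) ≤ s := by
    have hrr2 : 16*(t*t)*(r*r) = 16*(t*t)*c2 := by rw [hrr]
    have h16 : (4*(r*t))*(4*(r*t)) ≤ s * s := by nlinarith only [htc2, hrr2, hss]
    nlinarith only [h16, hs0.le, mul_pos hr ht0]
  have hδrts : 4 * (r * (t * s)) ≤ δ := by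
    nlinarith only [mul_le_mul_of_nonneg_right hrts hs0.le, hss]
  -- ### choose y
  obtain ⟨y, hy1, hyR⟩ := Hy t ht0
  -- ### extraction of near-optimal γ for a given perturbation
  haveI : Nonempty {γ : ℝ // 0 < γ} := ⟨⟨1, one_pos⟩⟩
  have hbb : ∀ Δ : H, BddBelow (Set.range fun γ : {γ : ℝ // 0 < γ} =>
      ‖-((γ.1 : 𝕜) • R γ.1 u) + R γ.1 Δ‖) := by
    intro Δ
    exact ⟨0, by rintro z ⟨γ, rfl⟩; positivity⟩
  have hba : BddAbove (Set.range fun Δ : {Δ : H // ‖Δ‖ ≤ δ} =>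
      ⨅ γ : {γ : ℝ // 0 < γ}, ‖-((γ.1 : 𝕜) • R γ.1 u) + R γ.1 Δ.1‖) := by
    refine ⟨‖R 1 u‖ + ‖R 1‖ * δ, ?_⟩
    rintro z ⟨Δ, rfl⟩
    refine le_trans (ciInf_le (hbb Δ.1) ⟨1, one_pos⟩) ?_
    calc ‖-(((1:ℝ):𝕜) • R 1 u) + R 1 Δ.1‖
        ≤ ‖-(((1:ℝ):𝕜) • R 1 u)‖ + ‖R 1 Δ.1‖ := norm_add_le _ _
      _ ≤ ‖R 1 u‖ + ‖R 1‖ * δ := by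
          rw [norm_neg]
          gcongr
          · rw [show ((1:ℝ):𝕜) = (1:𝕜) by norm_num, one_smul]
          · exact le_trans ((R 1).le_opNorm Δ.1)
              (mul_le_mul_of_nonneg_left Δ.2 (norm_nonneg (R 1)))
  have hinf : ∀ Δ : H, ‖Δ‖ ≤ δ → ∃ γ : {γ : ℝ // 0 < γ},
      ‖-((γ.1 : 𝕜) • R γ.1 u) + R γ.1 Δ‖ < c' * s := by
    intro Δ hΔ
    apply exists_lt_of_ciInf_lt
    calc (⨅ γ : {γ : ℝ // 0 < γ}, ‖-((γ.1 : 𝕜) • R γ.1 u) + R γ.1 Δ‖)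
        ≤ (⨆ Δ : {Δ : H // ‖Δ‖ ≤ δ}, ⨅ γ : {γ : ℝ // 0 < γ},
          ‖-((γ.1 : 𝕜) • R γ.1 u) + R γ.1 Δ.1‖) := le_ciSup hba ⟨Δ, hΔ⟩
      _ ≤ c'/2 * s := hPle
      _ < c' * s := by
          have hring : c'*s = c'/2*s + c'/2*s := by ring
          linarith only [hring, mul_pos (half_pos hc') hs0]
  -- conversion to the convenient form
  have hconv : ∀ γ : ℝ, ∀ c : ℝ,
      ‖-((γ:𝕜) • R γ u) + R γ ((c:𝕜) • y)‖ = ‖R γ ((γ:𝕜) • u - (c:𝕜) • y)‖ := by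
    intro γ c
    rw [map_sub, map_smul, map_smul]
    rw [show -((γ:𝕜) • R γ u) + (c:𝕜) • R γ y
      = -((γ:𝕜) • R γ u - (c:𝕜) • R γ y) by abel]
    rw [norm_neg]
  -- norm of R γ x from below : δ‖R γ y‖ − γ‖R γ u‖ ≤ ‖R γ x‖ when |c| = δ
  have hlow : ∀ γ : ℝ, 0 < γ → ∀ c : ℝ, |c| = δ →
      |c| * ‖R γ y‖ - γ * ‖R γ u‖ ≤ ‖R γ ((γ:𝕜) • u - (c:𝕜) • y)‖ := by
    intro γ hγ c hc
    rw [map_sub, map_smul, map_smul]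
    calc |c| * ‖R γ y‖ - γ * ‖R γ u‖
        = ‖(c:𝕜) • R γ y‖ - ‖(γ:𝕜) • R γ u‖ := by
          rw [norm_smul, norm_smul, RCLike.norm_ofReal, RCLike.norm_ofReal,
            abs_of_pos hγ]
      _ ≤ ‖(γ:𝕜) • R γ u - (c:𝕜) • R γ y‖ := by
          rw [norm_sub_rev]
          exact norm_sub_norm_le _ _
  -- ### the key regional classification
  have hkey : ∀ c : ℝ, |c| = δ → ∀ γ : ℝ, 0 < γ →
      ‖R γ ((γ:𝕜) • u - (c:𝕜) • y)‖ < c' * s →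
      γ < s ∧ δ < 4 * (γ * (γ * ‖R γ u‖)) := by
    intro c hc γ hγ hflt
    have hxlow : γ * ‖u‖ - δ ≤ ‖(γ:𝕜) • u - (c:𝕜) • y‖ := by
      have h1 : ‖(γ:𝕜) • u‖ - ‖(c:𝕜) • y‖ ≤ ‖(γ:𝕜) • u - (c:𝕜) • y‖ :=
        norm_sub_norm_le _ _
      have h2 : ‖(γ:𝕜) • u‖ = γ * ‖u‖ := by
        rw [norm_smul, RCLike.norm_ofReal, abs_of_pos hγ]
      have h3 : ‖(c:𝕜) • y‖ ≤ δ := by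
        rw [norm_smul, RCLike.norm_ofReal, hc]
        calc δ * ‖y‖ ≤ δ * 1 := mul_le_mul_of_nonneg_left hy1 hδ0.le
          _ = δ := mul_one δ
      linarith only [h1, h2, h3]
    -- (a) γ < s
    have hγs : γ < s := by
      by_contra hge
      push_neg at hge
      have h2 := H2 γ hγ ((γ:𝕜) • u - (c:𝕜) • y)
      have h2' : γ * ‖u‖ - δ ≤ (‖A‖ + γ) * ‖R γ ((γ:𝕜) • u - (c:𝕜) • y)‖ :=
        le_trans hxlow h2
      exact lavrentiev_arith_a ‖A‖ ‖u‖ δ s c' γ (‖R γ ((γ:𝕜) • u - (c:𝕜) • y)‖)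
        hu0 (norm_nonneg A) hδ0 hss hs0 hs1 hsu hδu2 hc'
        (by rw [hc2def] at hc'c2; exact hc'c2) hge (norm_nonneg _) h2' hflt
    -- (b) t < γ
    have hγt : t < γ := by
      by_contra hle
      push_neg at hle
      have h5 : ‖R t y‖ ≤ ‖R γ y‖ := H5 t γ hγ hle y
      have h4 : γ * ‖R γ u‖ ≤ t * ‖R t u‖ := H4 γ t hγ hle u
      have hR := hlow γ hγ c hc
      rw [hc] at hR
      have h6 : δ * ‖R t y‖ - t * ‖R t u‖ < c' * s := by
        have h5' : δ * ‖R t y‖ ≤ δ * ‖R γ y‖ :=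
          mul_le_mul_of_nonneg_left h5 hδ0.le
        linarith only [h5', hR, h4, hflt]
      exact lavrentiev_arith_b δ s r t c' (‖R t y‖) (t * ‖R t u‖)
        hδ0 hs0 ht0 hr hc' hc'r hyR hφteq hδrts h6
    -- (c) band lower bound
    have hband : δ < 4 * (γ * (γ * ‖R γ u‖)) := by
      by_contra hle
      push_neg at hle
      have h4y : t * ‖R t y‖ ≤ γ * ‖R γ y‖ := H4 t γ ht0 (le_of_lt hγt) y
      have hR := hlow γ hγ c hc
      rw [hc] at hR
      have h6 : δ * ‖R γ y‖ - γ * ‖R γ u‖ < c' * s := by linarith only [hR, hflt]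
      exact lavrentiev_arith_c δ s c' γ (‖R γ y‖) (γ * ‖R γ u‖)
        hδ0 hs0 hss hγ hγs hc' hc'8 (le_trans hyR h4y) hle (by positivity) h6
    exact ⟨hγs, hband⟩
  -- ### apply to the two perturbations ±δ y
  have hnormy : ∀ c : ℝ, |c| = δ → ‖(c:𝕜) • y‖ ≤ δ := by
    intro c hc
    rw [norm_smul, RCLike.norm_ofReal, hc]
    calc δ * ‖y‖ ≤ δ * 1 := mul_le_mul_of_nonneg_left hy1 hδ0.le
      _ = δ := mul_one δ
  obtain ⟨⟨γp, hγp⟩, hfp⟩ := hinf ((δ:𝕜) • y) (hnormy δ (abs_of_pos hδ0))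
  rw [hconv γp δ] at hfp
  obtain ⟨hγps, hγpband⟩ := hkey δ (abs_of_pos hδ0) γp hγp hfp
  obtain ⟨⟨γm, hγm⟩, hfm⟩ := hinf (((-δ:ℝ):𝕜) • y)
    (hnormy (-δ) (by rw [abs_neg, abs_of_pos hδ0]))
  rw [hconv γm (-δ)] at hfm
  obtain ⟨hγms, hγmband⟩ := hkey (-δ) (by rw [abs_neg, abs_of_pos hδ0]) γm hγm hfm
  -- ### propagation to the common scale τ = min γp γm
  set τ : ℝ := min γp γm with hτdef
  have hτ0 : 0 < τ := lt_min hγp hγm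
  have hτband : δ < 4 * (τ * (τ * ‖R τ u‖)) := by
    rcases le_total γp γm with h | h
    · rw [hτdef, min_eq_left h]; exact hγpband
    · rw [hτdef, min_eq_right h]; exact hγmband
  have hprop : ∀ γ : ℝ, 0 < γ → γ < s → τ ≤ γ → ∀ z : H,
      ‖R γ z‖ < c' * s → τ * ‖R τ z‖ < c' * δ := by
    intro γ hγ hγs hτγ z hz
    have h := Hres τ γ hτ0 hγ z
    have h1 : τ * ‖R τ z‖ ≤ τ * ‖R γ z‖ + τ * ((γ - τ) * ‖R τ (R γ z)‖) := by
      rw [h]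
      have htri := norm_add_le (R γ z) (((γ - τ : ℝ):𝕜) • R τ (R γ z))
      have h2 : ‖((γ - τ : ℝ):𝕜) • R τ (R γ z)‖ = (γ - τ) * ‖R τ (R γ z)‖ := by
        rw [norm_smul, RCLike.norm_ofReal, abs_of_nonneg (by linarith only [hτγ])]
      rw [h2] at htri
      calc τ * ‖R γ z + ((γ - τ : ℝ):𝕜) • R τ (R γ z)‖
          ≤ τ * (‖R γ z‖ + (γ - τ) * ‖R τ (R γ z)‖) :=
            mul_le_mul_of_nonneg_left htri hτ0.le
        _ = τ * ‖R γ z‖ + τ * ((γ - τ) * ‖R τ (R γ z)‖) := by ring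
    have h3 : τ * ‖R τ (R γ z)‖ ≤ ‖R γ z‖ := H1 τ hτ0 (R γ z)
    exact lavrentiev_arith_prop δ s c' τ γ (‖R τ z‖) (‖R γ z‖) (‖R τ (R γ z)‖)
      hτ0 hγ hγs hτγ hss hc' hs0 (norm_nonneg _) (norm_nonneg _) (norm_nonneg _)
      h1 h3 hz
  have hτp : τ ≤ γp := min_le_left _ _
  have hτm : τ ≤ γm := min_le_right _ _
  have hp1 : τ * ‖R τ ((γp:𝕜) • u - ((δ:ℝ):𝕜) • y)‖ < c' * δ :=
    hprop γp hγp hγps hτp _ hfp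
  have hm1 : τ * ‖R τ ((γm:𝕜) • u - ((-δ:ℝ):𝕜) • y)‖ < c' * δ :=
    hprop γm hγm hγms hτm _ hfm
  -- sum of the two vectors
  have hsum : R τ ((γp:𝕜) • u - ((δ:ℝ):𝕜) • y) + R τ ((γm:𝕜) • u - ((-δ:ℝ):𝕜) • y)
      = (((γp + γm : ℝ)):𝕜) • R τ u := by
    rw [← map_add, ← map_smul]
    congr 1
    rw [RCLike.ofReal_add, add_smul, RCLike.ofReal_neg, neg_smul]
    abel
  have hfin : τ * ((γp + γm) * ‖R τ u‖) < 2 * (c' * δ) := by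
    have h1 : ‖(((γp + γm : ℝ)):𝕜) • R τ u‖ = (γp + γm) * ‖R τ u‖ := by
      rw [norm_smul, RCLike.norm_ofReal, abs_of_pos (by linarith)]
    have h2 : ‖(((γp + γm : ℝ)):𝕜) • R τ u‖
        ≤ ‖R τ ((γp:𝕜) • u - ((δ:ℝ):𝕜) • y)‖ + ‖R τ ((γm:𝕜) • u - ((-δ:ℝ):𝕜) • y)‖ := by
      rw [← hsum]; exact norm_add_le _ _
    have h4 := mul_le_mul_of_nonneg_left h2 hτ0.le
    rw [h1] at h4
    linarith only [hp1, hm1, h4]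
  exact lavrentiev_arith_final δ c' τ γp γm (‖R τ u‖)
    hδ0 hτ0 (norm_nonneg _) hτp hτm hτband hfin hc'8
end
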